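/- arXiv:2311.12763 — 4 statements merged into one kernel-verified Lean document; each statement's English description precedes it below -/
import Mathlib

section
/- For every k, the free group on k generators is bi-orderable. -/
set_option linter.unreachableTactic false
set_option linter.unusedTactic false

namespace MagnusOrder

variable {k : ℕ}

structure RR (k : ℕ) where
  coef : List (Fin k) → ℤ

@[ext] lemma RR.ext' {f g : RR k} (h : ∀ w, f.coef w = g.coef w) : f = g := by
  cases f; cases g; simp only [RR.mk.injEq]; funext w; exact h w

instance : One (RR k) := ⟨⟨fun w => if w = [] then 1 else 0⟩⟩
instance : Mul (RR k) :=
  ⟨fun f g => ⟨fun w => ∑ j ∈ Finset.range (w.length + 1),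
      f.coef (w.take j) * g.coef (w.drop j)⟩⟩
instance : Add (RR k) := ⟨fun f g => ⟨fun w => f.coef w + g.coef w⟩⟩

lemma one_coef (w : List (Fin k)) : (1 : RR k).coef w = if w = [] then 1 else 0 := rfl

lemma mul_coef (f g : RR k) (w : List (Fin k)) :
    (f * g).coef w = ∑ j ∈ Finset.range (w.length + 1),
      f.coef (w.take j) * g.coef (w.drop j) := rfl

lemma add_coef (f g : RR k) (w : List (Fin k)) :
    (f + g).coef w = f.coef w + g.coef w := rfl

lemma one_mul' (f : RR k) : 1 * f = f := by
  ext w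
  rw [mul_coef]
  rw [Finset.sum_eq_single 0]
  · simp [one_coef]
  · intro b hb hb0
    rw [one_coef, if_neg, zero_mul]
    rw [List.take_eq_nil_iff]
    rintro (h | h)
    · exact hb0 h
    · subst h; simp at hb; omega
  · simp

lemma mul_one' (f : RR k) : f * 1 = f := by
  ext w
  rw [mul_coef]
  rw [Finset.sum_eq_single w.length]
  · simp [one_coef]
  · intro b hb hb0
    rw [one_coef, if_neg, mul_zero]
    rw [List.drop_eq_nil_iff]
    simp at hb; omega
  · simp

lemma sigmaNat_ext {a b : (_ : ℕ) × ℕ} (h1 : a.1 = b.1) (h2 : a.2 = b.2) : a = b := by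
  cases a; cases b; cases h1; cases h2; rfl

lemma mul_assoc' (f g h : RR k) : f * g * h = f * (g * h) := by
  ext w
  show (∑ j ∈ Finset.range (w.length + 1), (f*g).coef (w.take j) * h.coef (w.drop j)) =
    ∑ j ∈ Finset.range (w.length + 1), f.coef (w.take j) * (g*h).coef (w.drop j)
  simp only [mul_coef, Finset.sum_mul, Finset.mul_sum]
  rw [Finset.sum_sigma', Finset.sum_sigma']
  refine Finset.sum_nbij' (fun p => ⟨p.2, p.1 - p.2⟩) (fun p => ⟨p.1 + p.2, p.1⟩) ?_ ?_ ?_ ?_ ?_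
  · rintro ⟨j, i⟩ hp
    simp only [Finset.mem_sigma, Finset.mem_range, List.length_take, List.length_drop] at hp ⊢
    omega
  · rintro ⟨i, m⟩ hp
    simp only [Finset.mem_sigma, Finset.mem_range, List.length_take, List.length_drop] at hp ⊢
    omega
  · rintro ⟨j, i⟩ hp
    simp only [Finset.mem_sigma, Finset.mem_range, List.length_take, List.length_drop] at hp
    exact sigmaNat_ext (by first | (simp; omega) | simp | omega) (by first | (simp; omega) | simp | omega)
  · rintro ⟨i, m⟩ hp
    simp only [Finset.mem_sigma, Finset.mem_range, List.length_take, List.length_drop] at hp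
    exact sigmaNat_ext (by first | (simp; omega) | simp | omega) (by first | (simp; omega) | simp | omega)
  · rintro ⟨j, i⟩ hp
    simp only [Finset.mem_sigma, Finset.mem_range, List.length_take, List.length_drop] at hp
    have h1 : (w.take j).take i = w.take i := by
      rw [List.take_take]; congr 1; omega
    have h2 : (w.take j).drop i = (w.drop i).take (j - i) := by
      rw [List.drop_take]
    have h3 : (w.drop i).drop (j - i) = w.drop j := by
      rw [List.drop_drop]; congr 1; omega
    rw [h1, h2, ← h3]
    ring

instance : Monoid (RR k) where
  one_mul := one_mul'
  mul_one := mul_one'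
  mul_assoc := mul_assoc'

lemma mul_add' (f g h : RR k) : f * (g + h) = f * g + f * h := by
  ext w
  simp only [mul_coef, add_coef, mul_add, Finset.sum_add_distrib]

lemma add_mul' (f g h : RR k) : (f + g) * h = f * h + g * h := by
  ext w
  simp only [mul_coef, add_coef, add_mul, Finset.sum_add_distrib]


/-! ### The Magnus units -/

def uFun (i : Fin k) : RR k := ⟨fun w => if w = [] ∨ w = [i] then 1 else 0⟩

def vFun (i : Fin k) : RR k :=
  ⟨fun w => if ∀ a ∈ w, a = i then (-1) ^ w.length else 0⟩

lemma uFun_coef_nil (i : Fin k) : (uFun i).coef [] = 1 := rfl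

lemma mul_coef_nil (f g : RR k) : (f * g).coef [] = f.coef [] * g.coef [] := by
  rw [mul_coef]; simp

lemma all_eq_replicate {i : Fin k} {l : List (Fin k)} (h : ∀ b ∈ l, b = i) :
    l = List.replicate l.length i := List.eq_replicate_of_mem h

lemma uv_eq_one (i : Fin k) : uFun i * vFun i = 1 := by
  ext w
  match w with
  | [] => rw [mul_coef]; simp [uFun, vFun, one_coef]
  | a :: t =>
    rw [mul_coef, one_coef, if_neg (by simp)]
    rw [show (a :: t).length + 1 = t.length + 1 + 1 from rfl]
    rw [Finset.sum_range_succ', Finset.sum_range_succ']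
    have hrest : ∀ j ∈ Finset.range t.length,
        (uFun i).coef ((a :: t).take (j + 1 + 1)) * (vFun i).coef ((a :: t).drop (j + 1 + 1)) = 0 := by
      intro j hj
      simp only [Finset.mem_range] at hj
      have hlen : ((a :: t).take (j + 1 + 1)).length = j + 2 := by
        rw [List.length_take]; simp; omega
      have : (uFun i).coef ((a :: t).take (j + 1 + 1)) = 0 := by
        unfold uFun
        simp only []
        rw [if_neg]
        rintro (h | h) <;> rw [h] at hlen <;> simp at hlen
      rw [this, zero_mul]
    rw [Finset.sum_congr rfl hrest, Finset.sum_const, smul_zero, zero_add]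
    show (uFun i).coef ((a :: t).take 1) * (vFun i).coef ((a :: t).drop 1)
      + (uFun i).coef ((a :: t).take 0) * (vFun i).coef ((a :: t).drop 0) = 0
    have e1 : (a :: t).take 1 = [a] := rfl
    have e2 : (a :: t).drop 1 = t := rfl
    have e3 : (a :: t).take 0 = [] := rfl
    have e4 : (a :: t).drop 0 = a :: t := rfl
    rw [e1, e2, e3, e4]
    unfold uFun vFun
    simp only []
    by_cases hai : a = i
    · subst hai
      by_cases ht : ∀ b ∈ t, b = a
      · simp only [List.forall_mem_cons, ht, and_true, true_and, if_pos (Or.inr rfl), if_true,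
          or_true, true_or, eq_self_iff_true, List.length_cons, pow_succ, if_pos trivial]
        rw [if_pos ht, if_pos ht]
        ring
      · simp [ht, List.forall_mem_cons]
    · simp [hai, List.forall_mem_cons]

lemma vu_eq_one (i : Fin k) : vFun i * uFun i = 1 := by
  ext w
  match w with
  | [] => rw [mul_coef]; simp [uFun, vFun, one_coef]
  | a :: t =>
    rw [mul_coef, one_coef, if_neg (by simp)]
    rw [show (a :: t).length = t.length + 1 from rfl]
    rw [Finset.sum_range_succ, Finset.sum_range_succ]
    have hrest : ∀ j ∈ Finset.range t.length,
        (vFun i).coef ((a :: t).take j) * (uFun i).coef ((a :: t).drop j) = 0 := by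
      intro j hj
      simp only [Finset.mem_range] at hj
      have hlen : ((a :: t).drop j).length = t.length + 1 - j := by
        rw [List.length_drop]; simp
      have : (uFun i).coef ((a :: t).drop j) = 0 := by
        unfold uFun
        simp only []
        rw [if_neg]
        rintro (h | h) <;> rw [h] at hlen <;> simp at hlen <;> omega
      rw [this, mul_zero]
    rw [Finset.sum_congr rfl hrest, Finset.sum_const, smul_zero, zero_add]
    have h1 : (a :: t).take (t.length + 1) = a :: t := by
      apply List.take_of_length_le; simp
    have h2 : (a :: t).drop (t.length + 1) = [] := by
      apply List.drop_of_length_le; simp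
    have hdlen : ((a :: t).drop t.length).length = 1 := by
      rw [List.length_drop]; simp
    have hne : (a :: t).drop t.length ≠ [] := by
      intro h; rw [h] at hdlen; simp at hdlen
    rw [h1, h2]
    by_cases hall : ∀ b ∈ a :: t, b = i
    · have hdall : ∀ b ∈ (a :: t).drop t.length, b = i :=
        fun b hb => hall b (List.mem_of_mem_drop hb)
      have hd : (a :: t).drop t.length = [i] := by
        rw [all_eq_replicate hdall, hdlen]; rfl
      have htall : ∀ b ∈ (a :: t).take t.length, b = i :=
        fun b hb => hall b (List.mem_of_mem_take hb)
      have htlen : ((a :: t).take t.length).length = t.length := by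
        rw [List.length_take]; simp
      rw [hd]
      unfold uFun vFun
      simp only []
      rw [if_pos htall, if_pos hall, htlen]
      rw [show (a :: t).length = t.length + 1 from rfl]
      simp [pow_succ]
    · have hv : (vFun i).coef (a :: t) = 0 := by
        unfold vFun; simp only []; rw [if_neg hall]
      rw [hv, zero_mul, add_zero]
      by_cases hdi : (a :: t).drop t.length = [i]
      · by_cases ht2 : ∀ b ∈ (a :: t).take t.length, b = i
        · exfalso
          apply hall
          intro b hb
          rw [← List.take_append_drop t.length (a :: t)] at hb
          rcases List.mem_append.1 hb with h | h
          · exact ht2 b h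
          · rw [hdi] at h; simpa using h
        · have : (vFun i).coef ((a :: t).take t.length) = 0 := by
            unfold vFun; simp only []; rw [if_neg ht2]
          rw [this, zero_mul]
      · have : (uFun i).coef ((a :: t).drop t.length) = 0 := by
          unfold uFun; simp only []
          rw [if_neg]
          rintro (h | h)
          · exact hne h
          · exact hdi h
        rw [this, mul_zero]

/-- The Magnus unit `1 + Xᵢ`. -/
def uu (i : Fin k) : (RR k)ˣ :=
  ⟨uFun i, vFun i, uv_eq_one i, vu_eq_one i⟩

/-- The Magnus embedding. -/
def mu : FreeGroup (Fin k) →* (RR k)ˣ := FreeGroup.lift uu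

/-- Constant coefficient as a monoid hom. -/
def ce : RR k →* ℤ where
  toFun f := f.coef []
  map_one' := rfl
  map_mul' f g := mul_coef_nil f g

lemma mu_coef_nil (g : FreeGroup (Fin k)) : ((mu g : (RR k)ˣ) : RR k).coef [] = 1 := by
  have h : (Units.map (ce (k := k))).comp mu = 1 := by
    apply FreeGroup.ext_hom
    intro a
    apply Units.ext
    have hof : mu (FreeGroup.of a) = uu a := FreeGroup.lift_apply_of
    rw [MonoidHom.comp_apply, MonoidHom.one_apply, hof]
    rfl
  have h2 : (Units.map (ce (k := k))) (mu g) = 1 := by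
    have := congrArg (fun φ => φ g) h
    simpa using this
  have h3 : ce ((mu g : (RR k)ˣ) : RR k) = 1 := by
    have := congrArg Units.val h2
    simpa using this
  exact h3


/-! ### Coefficients of integer powers of the Magnus units -/

lemma mul_u_coef_single (f : RR k) (i : Fin k) :
    (f * uFun i).coef [i] = f.coef [] + f.coef [i] := by
  rw [mul_coef]
  rw [show ([i] : List (Fin k)).length + 1 = 2 from rfl]
  rw [Finset.sum_range_succ, Finset.sum_range_succ, Finset.sum_range_zero]
  show 0 + f.coef [] * (uFun i).coef [i] + f.coef [i] * (uFun i).coef [] = _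
  unfold uFun
  simp

lemma mul_v_coef_single (f : RR k) (i : Fin k) :
    (f * vFun i).coef [i] = f.coef [i] - f.coef [] := by
  rw [mul_coef]
  rw [show ([i] : List (Fin k)).length + 1 = 2 from rfl]
  rw [Finset.sum_range_succ, Finset.sum_range_succ, Finset.sum_range_zero]
  show 0 + f.coef [] * (vFun i).coef [i] + f.coef [i] * (vFun i).coef [] = _
  unfold vFun
  simp only [List.mem_singleton, forall_eq, if_pos trivial, List.length_singleton,
    List.length_nil, pow_one, pow_zero, List.mem_nil_iff, false_implies, implies_true]
  ring

lemma uu_inv_val (i : Fin k) : (((uu i)⁻¹ : (RR k)ˣ) : RR k) = vFun i := rfl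

lemma uu_zpow_eq_mu (i : Fin k) (e : ℤ) : (uu i) ^ e = mu ((FreeGroup.of i) ^ e) := by
  rw [map_zpow]
  congr 1
  exact (FreeGroup.lift_apply_of).symm

lemma uu_zpow_coef_nil (i : Fin k) (e : ℤ) :
    (((uu i ^ e : (RR k)ˣ)) : RR k).coef [] = 1 := by
  rw [uu_zpow_eq_mu]; exact mu_coef_nil _

lemma uu_zpow_coef_single (i : Fin k) (e : ℤ) :
    (((uu i ^ e : (RR k)ˣ)) : RR k).coef [i] = e := by
  induction e using Int.induction_on with
  | zero => simp [one_coef]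
  | succ n ih =>
    rw [zpow_add_one]
    rw [Units.val_mul]
    show (((uu i ^ (n:ℤ) : (RR k)ˣ) : RR k) * uFun i).coef [i] = _
    rw [mul_u_coef_single, ih, uu_zpow_coef_nil]
    try (push_cast; try ring)
  | pred n ih =>
    rw [show (-(n:ℤ) - 1) = (-(n:ℤ)) - 1 from rfl, zpow_sub_one]
    rw [Units.val_mul]
    show (((uu i ^ (-(n:ℤ) : ℤ) : (RR k)ˣ) : RR k) * vFun i).coef [i] = _
    rw [mul_v_coef_single, ih, uu_zpow_coef_nil]
    try (push_cast; try ring)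

lemma mul_support_all {f g : RR k} {i : Fin k}
    (hf : ∀ w, f.coef w ≠ 0 → ∀ a ∈ w, a = i)
    (hg : ∀ w, g.coef w ≠ 0 → ∀ a ∈ w, a = i) :
    ∀ w, (f * g).coef w ≠ 0 → ∀ a ∈ w, a = i := by
  intro w hw a ha
  rw [mul_coef] at hw
  obtain ⟨j, _, hj⟩ := Finset.exists_ne_zero_of_sum_ne_zero hw
  rw [← List.take_append_drop j w] at ha
  rcases List.mem_append.1 ha with h | h
  · exact hf _ (fun hz => hj (by rw [hz, zero_mul])) a h
  · exact hg _ (fun hz => hj (by rw [hz, mul_zero])) a h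

lemma uu_zpow_support (i : Fin k) (e : ℤ) :
    ∀ w, (((uu i ^ e : (RR k)ˣ)) : RR k).coef w ≠ 0 → ∀ a ∈ w, a = i := by
  induction e using Int.induction_on with
  | zero =>
    intro w hw a ha
    simp only [zpow_zero, Units.val_one, one_coef] at hw
    by_cases h : w = []
    · rw [h] at ha; simp at ha
    · rw [if_neg h] at hw; exact absurd rfl hw
  | succ n ih =>
    rw [zpow_add_one]
    have hu : ∀ w, (uFun i).coef w ≠ 0 → ∀ a ∈ w, a = i := by
      intro w hw a ha
      unfold uFun at hw
      simp only [ne_eq, ite_eq_right_iff, not_forall] at hw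
      obtain ⟨h, -⟩ := hw
      rcases h with h | h
      · rw [h] at ha; simp at ha
      · rw [h] at ha; simpa using ha
    rw [Units.val_mul]
    exact mul_support_all ih hu
  | pred n ih =>
    rw [show (-(n:ℤ) - 1) = (-(n:ℤ)) - 1 from rfl, zpow_sub_one]
    have hv : ∀ w, (vFun i).coef w ≠ 0 → ∀ a ∈ w, a = i := by
      intro w hw a ha
      unfold vFun at hw
      simp only [ne_eq, ite_eq_right_iff] at hw
      by_cases h : ∀ b ∈ w, b = i
      · exact h a ha
      · exfalso; exact hw (fun hh => absurd hh h) -- fix below if needed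
    rw [Units.val_mul, uu_inv_val]
    exact mul_support_all ih hv

/-! ### Products over runs -/

def prodU (rs : List (Fin k × ℤ)) : (RR k)ˣ := (rs.map (fun p => uu p.1 ^ p.2)).prod

lemma prodU_cons (p : Fin k × ℤ) (rs : List (Fin k × ℤ)) :
    prodU (p :: rs) = uu p.1 ^ p.2 * prodU rs := by
  simp [prodU]

def Blocks : List (Fin k × ℤ) → List (Fin k) → Prop
  | [], w => w = []
  | p :: rs, w => ∃ n v, Blocks rs v ∧ w = List.replicate n p.1 ++ v

lemma blocks_of_coef : ∀ (rs : List (Fin k × ℤ)) (w : List (Fin k)),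
    ((prodU rs : (RR k)ˣ) : RR k).coef w ≠ 0 → Blocks rs w := by
  intro rs
  induction rs with
  | nil =>
    intro w hw
    simp only [prodU, List.map_nil, List.prod_nil, Units.val_one, one_coef] at hw
    by_cases h : w = []
    · exact h
    · rw [if_neg h] at hw; exact absurd rfl hw
  | cons p rs ih =>
    intro w hw
    rw [prodU_cons, Units.val_mul, mul_coef] at hw
    obtain ⟨j, hjmem, hj⟩ := Finset.exists_ne_zero_of_sum_ne_zero hw
    have h1 : (((uu p.1 ^ p.2 : (RR k)ˣ)) : RR k).coef (w.take j) ≠ 0 :=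
      fun hz => hj (by rw [hz, zero_mul])
    have h2 : ((prodU rs : (RR k)ˣ) : RR k).coef (w.drop j) ≠ 0 :=
      fun hz => hj (by rw [hz, mul_zero])
    refine ⟨(w.take j).length, w.drop j, ih _ h2, ?_⟩
    rw [← all_eq_replicate (uu_zpow_support p.1 p.2 _ h1)]
    exact (List.take_append_drop j w).symm

lemma blocks_length_le : ∀ (rs : List (Fin k × ℤ)) (w : List (Fin k)),
    Blocks rs w → List.Chain' (· ≠ ·) w → w.length ≤ rs.length := by
  intro rs
  induction rs with
  | nil => intro w hb _; rw [hb]; simp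
  | cons p rs ih =>
    rintro w ⟨n, v, hb, rfl⟩ hc
    have hcv : List.Chain' (· ≠ ·) v := (List.isChain_append.1 hc).2.1
    have hn : n ≤ 1 := by
      by_contra hn'
      have h2 : 2 ≤ n := by omega
      obtain ⟨m, rfl⟩ : ∃ m, n = m + 2 := ⟨n - 2, by omega⟩
      have : List.Chain' (· ≠ ·) (List.replicate (m + 2) p.1) := (List.isChain_append.1 hc).1
      rw [List.replicate_succ, List.replicate_succ] at this
      exact (List.isChain_cons_cons.1 this).1 rfl
    have := ih v hb hcv
    simp only [List.length_append, List.length_replicate, List.length_cons]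
    omega

lemma prodU_coef_word : ∀ (rs : List (Fin k × ℤ)),
    List.Chain' (fun p q => p.1 ≠ q.1) rs → (∀ p ∈ rs, p.2 ≠ 0) →
    ((prodU rs : (RR k)ˣ) : RR k).coef (rs.map Prod.fst) = (rs.map Prod.snd).prod := by
  intro rs
  induction rs with
  | nil => simp [prodU, one_coef]
  | cons p rs ih =>
    intro hc hnz
    rw [prodU_cons, Units.val_mul, mul_coef]
    have hw : ((p :: rs).map Prod.fst) = p.1 :: rs.map Prod.fst := rfl
    rw [hw]
    have hlen : (p.1 :: rs.map Prod.fst).length = rs.length + 1 := by simp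
    rw [hlen]
    rw [Finset.sum_eq_single 1]
    · have ht : (p.1 :: rs.map Prod.fst).take 1 = [p.1] := rfl
      have hd : (p.1 :: rs.map Prod.fst).drop 1 = rs.map Prod.fst := rfl
      rw [ht, hd, uu_zpow_coef_single,
        ih (List.isChain_cons.1 hc).2 (fun q hq => hnz q (List.mem_cons_of_mem _ hq))]
      simp
    · intro j hjmem hj1
      simp only [Finset.mem_range] at hjmem
      rcases Nat.eq_zero_or_pos j with rfl | hj0
      · -- j = 0
        have ht : (p.1 :: rs.map Prod.fst).take 0 = [] := rfl
        have hd : (p.1 :: rs.map Prod.fst).drop 0 = p.1 :: rs.map Prod.fst := rfl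
        rw [ht, hd]
        have : ((prodU rs : (RR k)ˣ) : RR k).coef (p.1 :: rs.map Prod.fst) = 0 := by
          by_contra hne
          have hb := blocks_of_coef rs _ hne
          have hchain : List.Chain' (· ≠ ·) (p.1 :: rs.map Prod.fst) := by
            rw [← hw]
            exact (List.isChain_map Prod.fst).2 hc
          have := blocks_length_le rs _ hb hchain
          simp at this
        rw [this, mul_zero]
      · -- j ≥ 2
        have hj2 : 2 ≤ j := by omega
        obtain ⟨q, rs', rfl⟩ : ∃ q rs', rs = q :: rs' := by
          cases rs with
          | nil => simp at hjmem; omega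
          | cons q rs' => exact ⟨q, rs', rfl⟩
        obtain ⟨j', rfl⟩ : ∃ j', j = j' + 2 := ⟨j - 2, by omega⟩
        have ht : (p.1 :: (q :: rs').map Prod.fst).take (j' + 2)
            = p.1 :: q.1 :: ((rs'.map Prod.fst).take j') := rfl
        have : (((uu p.1 ^ p.2 : (RR k)ˣ)) : RR k).coef
            ((p.1 :: (q :: rs').map Prod.fst).take (j' + 2)) = 0 := by
          by_contra hne
          have hall := uu_zpow_support p.1 p.2 _ hne
          rw [ht] at hall
          have : q.1 = p.1 := hall q.1 (by simp)
          exact (List.isChain_cons_cons.1 hc).1 this.symm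
        rw [this, zero_mul]
    · intro h
      simp only [Finset.mem_range] at h
      omega



/-! ### Run-length decomposition of reduced words -/

def runs : List (Fin k × Bool) → List ((Fin k × Bool) × ℕ)
  | [] => []
  | p :: L =>
    match runs L with
    | [] => [(p, 1)]
    | (q, n) :: rs => if p = q then (q, n + 1) :: rs else (p, 1) :: (q, n) :: rs

lemma runs_cons_head (p : Fin k × Bool) (L : List (Fin k × Bool)) :
    ∃ n rs, runs (p :: L) = (p, n) :: rs := by
  cases h : runs L with
  | nil => exact ⟨1, [], by simp [runs, h]⟩
  | cons qn rs =>
    obtain ⟨q, n⟩ := qn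
    by_cases hpq : p = q
    · subst hpq
      exact ⟨n + 1, rs, by simp [runs, h]⟩
    · exact ⟨1, (q, n) :: rs, by simp [runs, h, hpq]⟩

lemma runs_eq_nil {L : List (Fin k × Bool)} (h : runs L = []) : L = [] := by
  cases L with
  | nil => rfl
  | cons p L =>
    obtain ⟨n, rs, hr⟩ := runs_cons_head p L
    rw [hr] at h
    exact absurd h (by simp)

lemma runs_flatten : ∀ L : List (Fin k × Bool),
    (runs L).flatMap (fun pn => List.replicate pn.2 pn.1) = L := by
  intro L
  induction L with
  | nil => rfl
  | cons p L ih =>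
    cases h : runs L with
    | nil =>
      have : L = [] := runs_eq_nil h
      subst this
      simp [runs]
    | cons qn rs =>
      obtain ⟨q, n⟩ := qn
      by_cases hpq : p = q
      · subst hpq
        have hr : runs (p :: L) = (p, n + 1) :: rs := by simp [runs, h]
        rw [hr, List.flatMap_cons, List.replicate_succ, List.cons_append]
        rw [h, List.flatMap_cons] at ih
        rw [ih]
      · have hr : runs (p :: L) = (p, 1) :: (q, n) :: rs := by simp [runs, h, hpq]
        rw [hr, List.flatMap_cons]
        rw [h] at ih
        rw [ih]
        rfl

lemma runs_pos : ∀ (L : List (Fin k × Bool)) pn, pn ∈ runs L → pn.2 ≠ 0 := by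
  intro L
  induction L with
  | nil => intro pn h; simp [runs] at h
  | cons p L ih =>
    intro pn hmem
    cases h : runs L with
    | nil =>
      have hr : runs (p :: L) = [(p, 1)] := by simp [runs, h]
      rw [hr] at hmem
      simp at hmem
      rw [hmem]
      simp
    | cons qn rs =>
      obtain ⟨q, n⟩ := qn
      by_cases hpq : p = q
      · subst hpq
        have hr : runs (p :: L) = (p, n + 1) :: rs := by simp [runs, h]
        rw [hr] at hmem
        rcases List.mem_cons.1 hmem with hh | hh
        · rw [hh]; simp
        · exact ih pn (by rw [h]; exact List.mem_cons_of_mem _ hh)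
      · have hr : runs (p :: L) = (p, 1) :: (q, n) :: rs := by simp [runs, h, hpq]
        rw [hr] at hmem
        rcases List.mem_cons.1 hmem with hh | hh
        · rw [hh]; simp
        · exact ih pn (by rw [h]; exact hh)

lemma runs_chain_pairs : ∀ L : List (Fin k × Bool),
    List.Chain' (fun a b => a.1 ≠ b.1) (runs L) := by
  intro L
  induction L with
  | nil => exact List.isChain_nil
  | cons p L ih =>
    cases h : runs L with
    | nil =>
      have hr : runs (p :: L) = [(p, 1)] := by simp [runs, h]
      rw [hr]; exact List.isChain_singleton _
    | cons qn rs =>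
      obtain ⟨q, n⟩ := qn
      rw [h] at ih
      by_cases hpq : p = q
      · subst hpq
        have hr : runs (p :: L) = (p, n + 1) :: rs := by simp [runs, h]
        rw [hr]
        exact List.isChain_cons.2 ⟨(List.isChain_cons.1 ih).1, (List.isChain_cons.1 ih).2⟩
      · have hr : runs (p :: L) = (p, 1) :: (q, n) :: rs := by simp [runs, h, hpq]
        rw [hr]
        exact List.isChain_cons_cons.2 ⟨hpq, ih⟩

/-! ### Chain' helpers -/

lemma chain'_of_forall_decomp {α : Type*} {R : α → α → Prop} :
    ∀ l : List α, (∀ (l₁ : List α) a b l₂, l = l₁ ++ a :: b :: l₂ → R a b) → List.Chain' R l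
  | [], _ => List.isChain_nil
  | [a], _ => List.isChain_singleton a
  | a :: b :: t, h =>
    List.isChain_cons_cons.2 ⟨h [] a b t rfl,
      chain'_of_forall_decomp (b :: t) (fun l₁ x y l₂ hl => h (a :: l₁) x y l₂ (by rw [hl]; rfl))⟩

lemma chain'_decomp {α : Type*} {R : α → α → Prop} :
    ∀ (l₁ : List α) (a b : α) (l₂ : List α), List.Chain' R (l₁ ++ a :: b :: l₂) → R a b
  | [], a, b, l₂, h => (List.isChain_cons_cons.1 h).1
  | c :: l₁, a, b, l₂, h => chain'_decomp l₁ a b l₂ h.tail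

lemma runs_adjacent {L : List (Fin k × Bool)} {rs₁ rs₂ : List ((Fin k × Bool) × ℕ)}
    {pn qm : (Fin k × Bool) × ℕ} (h : runs L = rs₁ ++ pn :: qm :: rs₂) :
    ∃ L₁ L₂, L = L₁ ++ pn.1 :: qm.1 :: L₂ := by
  have hf := runs_flatten L
  rw [h] at hf
  have hp : pn.2 ≠ 0 := runs_pos L pn (by rw [h]; simp)
  have hq : qm.2 ≠ 0 := runs_pos L qm (by rw [h]; simp)
  obtain ⟨n, hn⟩ : ∃ n, pn.2 = n + 1 := ⟨pn.2 - 1, by omega⟩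
  obtain ⟨m, hm⟩ : ∃ m, qm.2 = m + 1 := ⟨qm.2 - 1, by omega⟩
  refine ⟨rs₁.flatMap (fun pn => List.replicate pn.2 pn.1) ++ List.replicate n pn.1,
    List.replicate m qm.1 ++ rs₂.flatMap (fun pn => List.replicate pn.2 pn.1), ?_⟩
  rw [← hf]
  have e1 : List.replicate pn.2 pn.1 = List.replicate n pn.1 ++ [pn.1] := by
    rw [hn]; exact List.replicate_succ' (n := n) (a := pn.1)
  have e2 : List.replicate qm.2 qm.1 = qm.1 :: List.replicate m qm.1 := by
    rw [hm]; rfl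
  simp only [List.flatMap_append, List.flatMap_cons, e1, e2]
  simp [List.append_assoc]

lemma runs_chain_letters (g : FreeGroup (Fin k)) :
    List.Chain' (fun a b => a.1.1 ≠ b.1.1) (runs g.toWord) := by
  apply chain'_of_forall_decomp
  intro rs₁ pn qm rs₂ hdec
  have hpq : pn.1 ≠ qm.1 := by
    have hch := runs_chain_pairs (k := k) g.toWord
    rw [hdec] at hch
    exact chain'_decomp rs₁ pn qm rs₂ hch
  intro hxx
  have hb : qm.1.2 = !pn.1.2 := by
    have h2 : pn.1.2 ≠ qm.1.2 := by
      intro h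
      exact hpq (Prod.ext hxx h)
    cases hcq : qm.1.2 <;> cases hcp : pn.1.2 <;> simp_all
  obtain ⟨L₁, L₂, hL⟩ := runs_adjacent hdec
  have hred : FreeGroup.reduce g.toWord = g.toWord := FreeGroup.reduce_toWord g
  have hqm : qm.1 = (pn.1.1, !pn.1.2) := by
    rcases hq : qm.1 with ⟨y, c⟩
    rw [hq] at hxx hb
    simp only at hxx hb
    rw [← hxx, hb]
  have : FreeGroup.reduce (α := Fin k) g.toWord
      = L₁ ++ (pn.1.1, pn.1.2) :: (pn.1.1, !pn.1.2) :: L₂ := by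
    rw [hred, hL, hqm]
  exact FreeGroup.reduce.not this

/-! ### mu as a product over runs -/

def runsZ (L : List (Fin k × Bool)) : List (Fin k × ℤ) :=
  (runs L).map (fun pn => (pn.1.1, if pn.1.2 then (pn.2 : ℤ) else -(pn.2 : ℤ)))

lemma prod_flatMap_phi : ∀ (rs : List ((Fin k × Bool) × ℕ)),
    (((rs.flatMap (fun pn => List.replicate pn.2 pn.1)).map
        (fun x => cond x.2 (uu x.1) (uu x.1)⁻¹)).prod : (RR k)ˣ)
      = prodU ((rs.map (fun pn => (pn.1.1, if pn.1.2 then (pn.2 : ℤ) else -(pn.2 : ℤ))))) := by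
  intro rs
  induction rs with
  | nil => simp [prodU]
  | cons pn rs ih =>
    simp only [List.flatMap_cons, List.map_append, List.prod_append, List.map_cons, prodU,
      List.map_map] at ih ⊢
    rw [ih]
    congr 1
    rw [List.map_replicate, List.prod_replicate]
    rcases pn with ⟨⟨x, b⟩, n⟩
    cases b
    · simp only [cond_false, Bool.false_eq_true, if_false]
      rw [inv_pow, ← zpow_natCast, ← zpow_neg]
    · simp only [cond_true, if_pos trivial]
      rw [← zpow_natCast]

lemma mu_eq_prodU (g : FreeGroup (Fin k)) : mu g = prodU (runsZ g.toWord) := by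
  have h2 := prod_flatMap_phi (k := k) (runs g.toWord)
  rw [runs_flatten] at h2
  conv_lhs => rw [← FreeGroup.mk_toWord (x := g)]
  exact (FreeGroup.lift_mk).trans h2

lemma int_list_prod_ne_zero : ∀ l : List ℤ, (∀ x ∈ l, x ≠ 0) → l.prod ≠ 0 := by
  intro l
  induction l with
  | nil => simp
  | cons x l ih =>
    intro h
    rw [List.prod_cons]
    exact mul_ne_zero (h x (by simp)) (ih (fun y hy => h y (List.mem_cons_of_mem _ hy)))

/-- Magnus injectivity: a nontrivial element has a nonzero coefficient
on a nonempty word. -/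
theorem exists_coef_ne_zero {g : FreeGroup (Fin k)} (hg : g ≠ 1) :
    ∃ w : List (Fin k), w ≠ [] ∧ ((mu g : (RR k)ˣ) : RR k).coef w ≠ 0 := by
  have hL : g.toWord ≠ [] := fun h => hg (FreeGroup.toWord_eq_nil_iff.1 h)
  have hrs : runs (k := k) g.toWord ≠ [] := fun h => hL (runs_eq_nil h)
  set rs : List (Fin k × ℤ) := runsZ g.toWord with hrsdef
  have hchain : List.Chain' (fun p q => p.1 ≠ q.1) rs := by
    rw [hrsdef, runsZ]
    apply (List.isChain_map _).2
    exact runs_chain_letters g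
  have hnz : ∀ p ∈ rs, p.2 ≠ 0 := by
    rintro p hp
    rw [hrsdef, runsZ] at hp
    obtain ⟨pn, hpn, rfl⟩ := List.mem_map.1 hp
    have := runs_pos g.toWord pn hpn
    by_cases hb : pn.1.2 <;> simp [hb] <;> omega
  refine ⟨rs.map Prod.fst, ?_, ?_⟩
  · rw [hrsdef, runsZ]
    simp only [ne_eq, List.map_eq_nil_iff]
    exact hrs
  · rw [mu_eq_prodU, ← hrsdef, prodU_coef_word rs hchain hnz]
    apply int_list_prod_ne_zero
    intro x hx
    obtain ⟨p, hp, rfl⟩ := List.mem_map.1 hx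
    exact hnz p hp



/-! ### Degree-lexicographic rank of words -/

def rank (w : List (Fin k)) : ℕ := w.foldl (fun (n : ℕ) (a : Fin k) => n * k + ((a : ℕ) + 1)) 0

lemma foldl_rank_shift : ∀ (v : List (Fin k)) (n : ℕ),
    v.foldl (fun (n : ℕ) (a : Fin k) => n * k + ((a : ℕ) + 1)) n
      = n * k ^ v.length + v.foldl (fun (n : ℕ) (a : Fin k) => n * k + ((a : ℕ) + 1)) 0 := by
  intro v
  induction v with
  | nil => intro n; simp
  | cons a v ih =>
    intro n
    show v.foldl _ (n * k + ((a : ℕ) + 1)) = n * k ^ (a :: v).length + v.foldl _ (0 * k + ((a : ℕ) + 1))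
    rw [ih (n * k + ((a : ℕ) + 1)), ih (0 * k + ((a : ℕ) + 1))]
    simp only [List.length_cons, pow_succ]
    ring

lemma rank_cons (a : Fin k) (v : List (Fin k)) :
    rank (a :: v) = ((a : ℕ) + 1) * k ^ v.length + rank v := by
  show v.foldl _ (0 * k + ((a : ℕ) + 1)) = _
  rw [foldl_rank_shift]
  unfold rank
  ring_nf

lemma rank_append (u v : List (Fin k)) :
    rank (u ++ v) = rank u * k ^ v.length + rank v := by
  unfold rank
  rw [List.foldl_append, foldl_rank_shift]

def lb (k m : ℕ) : ℕ := ∑ j ∈ Finset.range m, k ^ j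

lemma rank_bounds (hk : 0 < k) : ∀ w : List (Fin k),
    lb k w.length ≤ rank w ∧ rank w < lb k (w.length + 1) := by
  intro w
  induction w with
  | nil =>
    constructor
    · simp [rank, lb]
    · simp [rank, lb]
  | cons a t ih =>
    rw [rank_cons]
    have hlb1 : lb k (t.length + 1) = lb k t.length + k ^ t.length := Finset.sum_range_succ _ _
    have hlb2 : lb k (t.length + 2) = lb k (t.length + 1) + k ^ (t.length + 1) :=
      Finset.sum_range_succ _ _
    have ha : (a : ℕ) + 1 ≤ k := a.isLt
    have h1 : k ^ t.length ≤ ((a : ℕ) + 1) * k ^ t.length :=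
      Nat.le_mul_of_pos_left _ (by omega)
    have h2 : ((a : ℕ) + 1) * k ^ t.length ≤ k * k ^ t.length :=
      Nat.mul_le_mul_right _ ha
    have h3 : k ^ (t.length + 1) = k ^ t.length * k := pow_succ k t.length
    have h4 : k ^ t.length * k = k * k ^ t.length := Nat.mul_comm _ _
    constructor
    · have := ih.1
      simp only [List.length_cons, hlb1]
      omega
    · have := ih.2
      simp only [List.length_cons, hlb2, hlb1]
      omega

lemma lb_mono {m₁ m₂ : ℕ} (h : m₁ ≤ m₂) : lb k m₁ ≤ lb k m₂ :=
  Finset.sum_le_sum_of_subset (Finset.range_subset_range.2 h)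

lemma rank_lt_of_length_lt (hk : 0 < k) {u v : List (Fin k)} (h : u.length < v.length) :
    rank u < rank v :=
  lt_of_lt_of_le ((rank_bounds hk u).2)
    (le_trans (lb_mono (k := k) h) ((rank_bounds hk v).1))

lemma rank_pos (hk : 0 < k) {w : List (Fin k)} (h : w ≠ []) : 1 ≤ rank w := by
  have h1 : 1 ≤ w.length := by
    cases w with
    | nil => exact absurd rfl h
    | cons a t => simp
  have h2 : lb k 1 ≤ lb k w.length := lb_mono h1
  have h3 : lb k 1 = 1 := by simp [lb]
  have := (rank_bounds hk w).1
  omega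

lemma rank_add_le (hk : 0 < k) (u v : List (Fin k)) :
    rank u + rank v ≤ rank (u ++ v) := by
  rw [rank_append]
  have : 1 ≤ k ^ v.length := Nat.one_le_pow _ _ hk
  have : rank u ≤ rank u * k ^ v.length := Nat.le_mul_of_pos_right _ (by omega)
  omega

lemma rank_injective (hk : 0 < k) : ∀ u v : List (Fin k), rank u = rank v → u = v := by
  intro u
  induction u with
  | nil =>
    intro v h
    cases v with
    | nil => rfl
    | cons b s =>
      exfalso
      have := rank_pos hk (List.cons_ne_nil b s)
      have h0 : rank ([] : List (Fin k)) = 0 := rfl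
      omega
  | cons a t ih =>
    intro v h
    cases v with
    | nil =>
      exfalso
      have := rank_pos hk (List.cons_ne_nil a t)
      have h0 : rank ([] : List (Fin k)) = 0 := rfl
      omega
    | cons b s =>
      have hlen : t.length = s.length := by
        rcases Nat.lt_trichotomy (a :: t).length (b :: s).length with hl | hl | hl
        · exact absurd h (Nat.ne_of_lt (rank_lt_of_length_lt hk hl))
        · simpa using hl
        · exact absurd h.symm (Nat.ne_of_lt (rank_lt_of_length_lt hk hl))
      rw [rank_cons, rank_cons, hlen] at h
      set K := k ^ s.length with hK
      have hKpos : 0 < K := Nat.pow_pos hk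
      have hbt := rank_bounds hk t
      have hbs := rank_bounds hk s
      have hlbt : lb k (t.length + 1) = lb k t.length + k ^ t.length := Finset.sum_range_succ _ _
      have hlbs : lb k (s.length + 1) = lb k s.length + k ^ s.length := Finset.sum_range_succ _ _
      have hab : (a : ℕ) = (b : ℕ) := by
        rcases Nat.lt_trichotomy (a : ℕ) (b : ℕ) with hl | hl | hl
        · exfalso
          have hsplit : ((b : ℕ) + 1) * K = ((a : ℕ) + 1) * K + ((b : ℕ) - (a : ℕ)) * K := by
            rw [← Nat.add_mul]; congr 1; omega
          have hKle : K ≤ ((b : ℕ) - (a : ℕ)) * K := Nat.le_mul_of_pos_left _ (by omega)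
          rw [hlen] at hbt hlbt
          omega
        · exact hl
        · exfalso
          have hsplit : ((a : ℕ) + 1) * K = ((b : ℕ) + 1) * K + ((a : ℕ) - (b : ℕ)) * K := by
            rw [← Nat.add_mul]; congr 1; omega
          have hKle : K ≤ ((a : ℕ) - (b : ℕ)) * K := Nat.le_mul_of_pos_left _ (by omega)
          rw [hlen] at hbt hlbt
          omega
      have hts : rank t = rank s := by
        rw [hab] at h
        omega
      have : t = s := ih s hts
      rw [this]
      congr 1
      exact Fin.ext hab

/-! ### The positive cone -/

/-- The Magnus expansion of `g` minus `1`. -/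
def dd (g : FreeGroup (Fin k)) : RR k :=
  ⟨fun w => ((mu g : (RR k)ˣ) : RR k).coef w - (1 : RR k).coef w⟩

lemma dd_coef (g : FreeGroup (Fin k)) (w : List (Fin k)) :
    (dd g).coef w = ((mu g : (RR k)ˣ) : RR k).coef w - (1 : RR k).coef w := rfl

lemma dd_nil (g : FreeGroup (Fin k)) : (dd g).coef [] = 0 := by
  rw [dd_coef, mu_coef_nil, one_coef]
  simp

lemma dd_ne_nil {w : List (Fin k)} (h : w ≠ []) (g : FreeGroup (Fin k)) :
    (dd g).coef w = ((mu g : (RR k)ˣ) : RR k).coef w := by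
  rw [dd_coef, one_coef, if_neg h]
  ring

lemma dd_one (w : List (Fin k)) : (dd (1 : FreeGroup (Fin k))).coef w = 0 := by
  rw [dd_coef, map_one]
  simp [Units.val_one]

lemma dd_mul (g h : FreeGroup (Fin k)) (w : List (Fin k)) :
    (dd (g * h)).coef w = (dd g).coef w + (dd h).coef w
      + ∑ j ∈ Finset.range (w.length + 1), (dd g).coef (w.take j) * (dd h).coef (w.drop j) := by
  by_cases hw : w = []
  · subst hw
    rw [show ((([] : List (Fin k))).length + 1) = 1 from rfl, Finset.sum_range_one]
    show (dd (g * h)).coef [] = (dd g).coef [] + (dd h).coef []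
      + (dd g).coef [] * (dd h).coef []
    rw [dd_nil, dd_nil, dd_nil]
    ring
  · rw [dd_ne_nil hw, map_mul, Units.val_mul, mul_coef]
    have hexp : ∀ u, ((mu g : (RR k)ˣ) : RR k).coef u = (1 : RR k).coef u + (dd g).coef u := by
      intro u; rw [dd_coef]; ring
    have hexph : ∀ u, ((mu h : (RR k)ˣ) : RR k).coef u = (1 : RR k).coef u + (dd h).coef u := by
      intro u; rw [dd_coef]; ring
    have key : ∀ j ∈ Finset.range (w.length + 1),
        ((mu g : (RR k)ˣ) : RR k).coef (w.take j) * ((mu h : (RR k)ˣ) : RR k).coef (w.drop j)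
        = ((1 : RR k).coef (w.take j) * (1 : RR k).coef (w.drop j)
            + (1 : RR k).coef (w.take j) * (dd h).coef (w.drop j))
          + ((dd g).coef (w.take j) * (1 : RR k).coef (w.drop j)
            + (dd g).coef (w.take j) * (dd h).coef (w.drop j)) := by
      intro j _
      rw [hexp, hexph]
      ring
    rw [Finset.sum_congr rfl key]
    rw [Finset.sum_add_distrib, Finset.sum_add_distrib, Finset.sum_add_distrib]
    rw [← mul_coef (1 : RR k) (1 : RR k) w, ← mul_coef (1 : RR k) (dd h) w,
      ← mul_coef (dd g) (1 : RR k) w, one_mul', one_mul', mul_one']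
    rw [one_coef, if_neg hw]
    ring

lemma dd_low_one (hk : 0 < k) (h : FreeGroup (Fin k)) :
    ∀ v, rank v < 1 → (dd h).coef v = 0 := by
  intro v hv
  by_cases hvn : v = []
  · rw [hvn]; exact dd_nil h
  · exact absurd hv (by have := rank_pos hk hvn; omega)

lemma cross_vanish (hk : 0 < k) {g h : FreeGroup (Fin k)} {r s : ℕ}
    (hg : ∀ v, rank v < r → (dd g).coef v = 0) (hh : ∀ v, rank v < s → (dd h).coef v = 0)
    {w : List (Fin k)} (hw : rank w < r + s) :
    ∀ j ∈ Finset.range (w.length + 1), (dd g).coef (w.take j) * (dd h).coef (w.drop j) = 0 := by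
  intro j _
  by_contra hne
  obtain ⟨h1, h2⟩ := mul_ne_zero_iff.1 hne
  have ht : w.take j ≠ [] := fun hz => h1 (by rw [hz]; exact dd_nil g)
  have hd : w.drop j ≠ [] := fun hz => h2 (by rw [hz]; exact dd_nil h)
  have hrt : r ≤ rank (w.take j) := by
    by_contra hlt; push_neg at hlt; exact h1 (hg _ hlt)
  have hrd : s ≤ rank (w.drop j) := by
    by_contra hlt; push_neg at hlt; exact h2 (hh _ hlt)
  have hsum : rank (w.take j) + rank (w.drop j) ≤ rank w := by
    conv_rhs => rw [← List.take_append_drop j w]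
    exact rank_add_le hk _ _
  omega

lemma dd_mul_coef_low (hk : 0 < k) {g h : FreeGroup (Fin k)} {r s : ℕ}
    (hg : ∀ v, rank v < r → (dd g).coef v = 0) (hh : ∀ v, rank v < s → (dd h).coef v = 0)
    {w : List (Fin k)} (hw : rank w < r + s) :
    (dd (g * h)).coef w = (dd g).coef w + (dd h).coef w := by
  rw [dd_mul, Finset.sum_eq_zero (cross_vanish hk hg hh hw)]
  ring

lemma dd_inv_eq (hk : 0 < k) {g : FreeGroup (Fin k)} {r : ℕ}
    (hg : ∀ v, rank v < r → (dd g).coef v = 0) :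
    ∀ w, rank w ≤ r → (dd g⁻¹).coef w = -(dd g).coef w := by
  intro w hw
  have h0 := dd_mul_coef_low hk hg (dd_low_one hk g⁻¹) (w := w) (by omega)
  rw [mul_inv_cancel] at h0
  rw [dd_one] at h0
  linarith

/-! ### sandwich lemmas -/

lemma mul_right_low (hk : 0 < k) {D : RR k} {r : ℕ} (hD0 : D.coef [] = 0)
    (hDlow : ∀ v, rank v < r → D.coef v = 0) (z : RR k) :
    ∀ w, rank w ≤ r → (D * z).coef w = D.coef w * z.coef [] := by
  intro w hw
  rw [mul_coef]
  rw [Finset.sum_eq_single w.length]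
  · rw [List.take_length, List.drop_length]
  · intro j hj hjne
    simp only [Finset.mem_range] at hj
    by_cases hz : D.coef (w.take j) = 0
    · rw [hz, zero_mul]
    · exfalso
      have htne : w.take j ≠ [] := fun hnil => hz (by rw [hnil]; exact hD0)
      have hrt : r ≤ rank (w.take j) := by
        by_contra hlt; push_neg at hlt; exact hz (hDlow _ hlt)
      have hdne : w.drop j ≠ [] := by
        rw [ne_eq, List.drop_eq_nil_iff]
        omega
      have h1 : 1 ≤ rank (w.drop j) := rank_pos hk hdne
      have hsum : rank (w.take j) + rank (w.drop j) ≤ rank w := by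
        conv_rhs => rw [← List.take_append_drop j w]
        exact rank_add_le hk _ _
      omega
  · simp

lemma mul_left_low (hk : 0 < k) {D : RR k} {r : ℕ} (hD0 : D.coef [] = 0)
    (hDlow : ∀ v, rank v < r → D.coef v = 0) (x : RR k) :
    ∀ w, rank w ≤ r → (x * D).coef w = x.coef [] * D.coef w := by
  intro w hw
  rw [mul_coef]
  rw [Finset.sum_eq_single 0]
  · rw [List.take_zero, List.drop_zero]
  · intro j hj hjne
    simp only [Finset.mem_range] at hj
    by_cases hz : D.coef (w.drop j) = 0
    · rw [hz, mul_zero]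
    · exfalso
      have hdne : w.drop j ≠ [] := fun hnil => hz (by rw [hnil]; exact hD0)
      have hrd : r ≤ rank (w.drop j) := by
        by_contra hlt; push_neg at hlt; exact hz (hDlow _ hlt)
      have htne : w.take j ≠ [] := by
        rw [ne_eq, List.take_eq_nil_iff]
        rintro (h | h)
        · exact hjne h
        · rw [h] at hj; simp at hj; omega
      have h1 : 1 ≤ rank (w.take j) := rank_pos hk htne
      have hsum : rank (w.take j) + rank (w.drop j) ≤ rank w := by
        conv_rhs => rw [← List.take_append_drop j w]
        exact rank_add_le hk _ _
      omega
  · simp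

lemma sandwich (hk : 0 < k) {D x z : RR k} {r : ℕ} (hD0 : D.coef [] = 0)
    (hDlow : ∀ v, rank v < r → D.coef v = 0) :
    ∀ w, rank w ≤ r → (x * D * z).coef w = x.coef [] * D.coef w * z.coef [] := by
  intro w hw
  have hD'0 : (x * D).coef [] = 0 := by rw [mul_coef_nil, hD0, mul_zero]
  have hD'low : ∀ v, rank v < r → (x * D).coef v = 0 := by
    intro v hv
    rw [mul_left_low hk hD0 hDlow x v (le_of_lt hv), hDlow v hv, mul_zero]
  rw [mul_right_low hk hD'0 hD'low z w hw, mul_left_low hk hD0 hDlow x w hw]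

lemma dd_conj (hk : 0 < k) {g : FreeGroup (Fin k)} {r : ℕ}
    (hg : ∀ v, rank v < r → (dd g).coef v = 0) (c : FreeGroup (Fin k)) :
    ∀ w, rank w ≤ r → (dd (c * g * c⁻¹)).coef w = (dd g).coef w := by
  intro w hw
  set x := ((mu c : (RR k)ˣ) : RR k) with hx
  set z := ((mu c⁻¹ : (RR k)ˣ) : RR k) with hz
  have hxz : x * z = 1 := by
    rw [hx, hz, ← Units.val_mul, ← map_mul, mul_inv_cancel, map_one, Units.val_one]
  have hmug : ((mu g : (RR k)ˣ) : RR k) = 1 + dd g := by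
    ext u; rw [add_coef, dd_coef]; ring
  have hval : ((mu (c * g * c⁻¹) : (RR k)ˣ) : RR k) = x * ((mu g : (RR k)ˣ) : RR k) * z := by
    rw [map_mul, map_mul, Units.val_mul, Units.val_mul]
  have hsplit : x * ((mu g : (RR k)ˣ) : RR k) * z = 1 + x * dd g * z := by
    rw [hmug, mul_add', mul_one', add_mul', hxz]
  have hDnil : (dd g).coef [] = 0 := dd_nil g
  have hx0 : x.coef [] = 1 := mu_coef_nil c
  have hz0 : z.coef [] = 1 := mu_coef_nil c⁻¹
  rw [dd_coef, hval, hsplit, add_coef, sandwich hk hDnil hg w hw, hx0, hz0]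
  ring

/-- Positivity: the lowest-rank nonzero coefficient is positive. -/
def Pos (f : RR k) : Prop :=
  ∃ w, 0 < f.coef w ∧ ∀ v, rank v < rank w → f.coef v = 0

lemma pos_witness_ne_nil {g : FreeGroup (Fin k)} {w : List (Fin k)}
    (h : 0 < (dd g).coef w) : w ≠ [] := by
  intro hnil
  rw [hnil, dd_nil] at h
  exact lt_irrefl 0 h

lemma pos_mul (hk : 0 < k) {g h : FreeGroup (Fin k)} (hg : Pos (dd g)) (hh : Pos (dd h)) :
    Pos (dd (g * h)) := by
  obtain ⟨a, ha, hga⟩ := hg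
  obtain ⟨b, hb, hgb⟩ := hh
  have ha1 : 1 ≤ rank a := rank_pos hk (pos_witness_ne_nil ha)
  have hb1 : 1 ≤ rank b := rank_pos hk (pos_witness_ne_nil hb)
  rcases Nat.lt_trichotomy (rank a) (rank b) with hab | hab | hab
  · refine ⟨a, ?_, ?_⟩
    · rw [dd_mul_coef_low hk hga hgb (by omega), hgb a hab]
      omega
    · intro v hv
      rw [dd_mul_coef_low hk hga hgb (by omega), hga v hv, hgb v (by omega)]
      ring
  · have hba : b = a := rank_injective hk b a hab.symm
    subst hba
    refine ⟨b, ?_, ?_⟩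
    · rw [dd_mul_coef_low hk hga hgb (by omega)]
      omega
    · intro v hv
      rw [dd_mul_coef_low hk hga hgb (by omega), hga v (by omega), hgb v (by omega)]
      ring
  · refine ⟨b, ?_, ?_⟩
    · rw [dd_mul_coef_low hk hga hgb (by omega), hga b hab]
      omega
    · intro v hv
      rw [dd_mul_coef_low hk hga hgb (by omega), hga v (by omega), hgb v hv]
      ring

lemma not_pos_both (hk : 0 < k) {g : FreeGroup (Fin k)}
    (h1 : Pos (dd g)) (h2 : Pos (dd g⁻¹)) : False := by
  obtain ⟨a, ha, hga⟩ := h1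
  obtain ⟨b, hb, hgb⟩ := h2
  rcases Nat.lt_trichotomy (rank b) (rank a) with hab | hab | hab
  · have := dd_inv_eq hk hga b (le_of_lt hab)
    rw [hga b hab] at this
    omega
  · have hba : b = a := rank_injective hk b a hab
    subst hba
    have := dd_inv_eq hk hga b le_rfl
    omega
  · have h3 := dd_inv_eq hk hga a le_rfl
    have h4 := hgb a hab
    omega

lemma pos_or_pos_inv (hk : 0 < k) {g : FreeGroup (Fin k)} (hg : g ≠ 1) :
    Pos (dd g) ∨ Pos (dd g⁻¹) := by
  classical
  obtain ⟨w₀, hw0ne, hw0⟩ := exists_coef_ne_zero hg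
  have hw0' : (dd g).coef w₀ ≠ 0 := by rw [dd_ne_nil hw0ne]; exact hw0
  have hex : ∃ n, ∃ v, rank v ≤ n ∧ (dd g).coef v ≠ 0 := ⟨rank w₀, w₀, le_rfl, hw0'⟩
  obtain ⟨v₀, hv₀le, hv₀⟩ := Nat.find_spec hex
  have hmin : ∀ v, rank v < rank v₀ → (dd g).coef v = 0 := by
    intro v hv
    by_contra hne
    exact Nat.find_min hex (m := rank v) (by omega) ⟨v, le_rfl, hne⟩
  rcases lt_trichotomy ((dd g).coef v₀) 0 with hneg | h0 | hpos
  · right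
    refine ⟨v₀, ?_, ?_⟩
    · rw [dd_inv_eq hk hmin v₀ le_rfl]
      omega
    · intro v hv
      rw [dd_inv_eq hk hmin v (le_of_lt hv), hmin v hv]
      ring
  · exact absurd h0 hv₀
  · exact Or.inl ⟨v₀, hpos, hmin⟩

lemma pos_conj (hk : 0 < k) {g : FreeGroup (Fin k)} (hg : Pos (dd g)) (c : FreeGroup (Fin k)) :
    Pos (dd (c * g * c⁻¹)) := by
  obtain ⟨a, ha, hga⟩ := hg
  refine ⟨a, ?_, ?_⟩
  · rw [dd_conj hk hga c a le_rfl]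
    exact ha
  · intro v hv
    rw [dd_conj hk hga c v (le_of_lt hv)]
    exact hga v hv

end MagnusOrder

/-- A group is bi-orderable if it admits a linear order invariant under
left and right multiplication. -/
def IsBiOrderable (G : Type*) [Group G] : Prop :=
  ∃ r : G → G → Prop, IsLinearOrder G r ∧
    ∀ a b c : G, r a b → r (c * a) (c * b) ∧ r (a * c) (b * c)

theorem freeGroup_biOrderable (k : ℕ) : IsBiOrderable (FreeGroup (Fin k)) := by
  rcases Nat.eq_zero_or_pos k with rfl | hk
  · -- the free group on zero generators is trivial
    have hsub : ∀ g : FreeGroup (Fin 0), g = 1 := by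
      intro g
      have h : g.toWord = [] := by
        cases h : g.toWord with
        | nil => rfl
        | cons p L => exact p.1.elim0
      exact FreeGroup.toWord_eq_nil_iff.1 h
    refine ⟨fun a b => a = b, ?_, ?_⟩
    · exact { refl := fun a => rfl,
              trans := fun a b c h1 h2 => h1.trans h2,
              antisymm := fun a b h1 _ => h1,
              total := fun a b => Or.inl ((hsub a).trans (hsub b).symm) }
    · intro a b c h
      rw [h]
      exact ⟨rfl, rfl⟩
  · refine ⟨fun a b => a = b ∨ MagnusOrder.Pos (MagnusOrder.dd (a⁻¹ * b)), ?_, ?_⟩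
    · refine { refl := fun a => Or.inl rfl,
               trans := ?_, antisymm := ?_, total := ?_ }
      · rintro a b c (rfl | h1) h2
        · exact h2
        · rcases h2 with rfl | h2
          · exact Or.inr h1
          · refine Or.inr ?_
            have : a⁻¹ * c = (a⁻¹ * b) * (b⁻¹ * c) := by group
            rw [this]
            exact MagnusOrder.pos_mul hk h1 h2
      · rintro a b (rfl | h1) h2
        · rfl
        · rcases h2 with rfl | h2
          · rfl
          · exfalso
            have hinv : (a⁻¹ * b)⁻¹ = b⁻¹ * a := by group
            exact MagnusOrder.not_pos_both hk h1 (by rw [hinv]; exact h2)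
      · intro a b
        by_cases hab : a = b
        · exact Or.inl (Or.inl hab)
        · have hne : a⁻¹ * b ≠ 1 := fun h => hab (inv_mul_eq_one.1 h)
          rcases MagnusOrder.pos_or_pos_inv hk hne with h | h
          · exact Or.inl (Or.inr h)
          · refine Or.inr (Or.inr ?_)
            have hinv : (a⁻¹ * b)⁻¹ = b⁻¹ * a := by group
            rw [← hinv]
            exact h
    · rintro a b c (rfl | h)
      · exact ⟨Or.inl rfl, Or.inl rfl⟩
      · constructor
        · refine Or.inr ?_
          have : (c * a)⁻¹ * (c * b) = a⁻¹ * b := by group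
          rw [this]
          exact h
        · refine Or.inr ?_
          have : (a * c)⁻¹ * (b * c) = c⁻¹ * (a⁻¹ * b) * (c⁻¹)⁻¹ := by group
          rw [this]
          exact MagnusOrder.pos_conj hk h c⁻¹
end

section
/- For every n ≥ 2, the pure braid group P_n is generated by the band generators A_{i,j} for 1 ≤ i < j ≤ n; that is, the kernel of the homomorphism π : B_n → Sym(n) equals the subgroup of B_n generated by the set {A_{i,j} : 1 ≤ i < j ≤ n}. -/
/-- The braid relations on generators `σ_0, …, σ_{m-1}` (0-indexed):
`σ_i σ_j = σ_j σ_i` when `|i - j| > 1` and `σ_i σ_j σ_i = σ_j σ_i σ_j`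
when `|i - j| = 1`. -/
def braidRels (m : ℕ) : Set (FreeGroup (Fin m)) :=
  {r | ∃ i j : Fin m,
    ((i.val + 2 ≤ j.val ∨ j.val + 2 ≤ i.val) ∧
      r = FreeGroup.of i * FreeGroup.of j * (FreeGroup.of j * FreeGroup.of i)⁻¹) ∨
    (j.val = i.val + 1 ∧
      r = FreeGroup.of i * FreeGroup.of j * FreeGroup.of i *
        (FreeGroup.of j * FreeGroup.of i * FreeGroup.of j)⁻¹)}

/-- The braid group on `n` strands, presented by `n - 1` generators and the
braid relations. -/
def BraidGroup (n : ℕ) := PresentedGroup (braidRels (n - 1))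

noncomputable instance (n : ℕ) : Group (BraidGroup n) :=
  inferInstanceAs (Group (PresentedGroup (braidRels (n - 1))))

/-- The Artin generator `σ_k` of the braid group on `n` strands,
with 1-based index `1 ≤ k ≤ n - 1` (junk value `1` otherwise). -/
noncomputable def braidσ (n : ℕ) (k : ℕ) : BraidGroup n :=
  if h : k - 1 < n - 1 then PresentedGroup.of ⟨k - 1, h⟩ else 1

/-- The band generator
`A_{i,j} = σ_i⁻¹ σ_{i+1}⁻¹ ⋯ σ_{j-2}⁻¹ σ_{j-1}⁻² σ_{j-2} ⋯ σ_{i+1} σ_i`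
of the pure braid group, `1 ≤ i < j ≤ n` (1-based indices). -/
noncomputable def bandGen (n i j : ℕ) : BraidGroup n :=
  (((List.range (j - 1 - i)).map fun t => (braidσ n (i + t))⁻¹).prod) *
    (braidσ n (j - 1))⁻¹ * (braidσ n (j - 1))⁻¹ *
    (((List.range (j - 1 - i)).map fun t => braidσ n (i + t)).reverse.prod)

section Desc

variable {G : Type*} [Group G]

/-- Descending product `x (a+len-1) * ⋯ * x (a+1) * x a`. -/
def descProd (x : ℕ → G) : ℕ → ℕ → G
  | _, 0 => 1
  | a, (len+1) => x (a + len) * descProd x a len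

@[simp] lemma descProd_zero (x : ℕ → G) (a : ℕ) : descProd x a 0 = 1 := rfl

lemma descProd_succ (x : ℕ → G) (a len : ℕ) :
    descProd x a (len+1) = x (a + len) * descProd x a len := rfl

lemma descProd_bot (x : ℕ → G) {a : ℕ} (ha : 1 ≤ a) (len : ℕ) :
    descProd x a len * x (a-1) = descProd x (a-1) (len+1) := by
  induction len with
  | zero => simp [descProd_succ]
  | succ len ih =>
      rw [descProd_succ, mul_assoc, ih]
      rw [descProd_succ x (a-1) (len+1), show a - 1 + (len + 1) = a + len by omega]

lemma descProd_comm (x : ℕ → G) {y : G} {a len : ℕ}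
    (h : ∀ t, a ≤ t → t < a + len → x t * y = y * x t) :
    descProd x a len * y = y * descProd x a len := by
  induction len with
  | zero => simp
  | succ len ih =>
      rw [descProd_succ, mul_assoc, ih fun t h1 h2 => h t h1 (by omega),
        ← mul_assoc, h (a+len) (by omega) (by omega), mul_assoc]

lemma descProd_swap (x : ℕ → G) (N : ℕ)
    (comm : ∀ u v, 1 ≤ u → u + 2 ≤ v → v ≤ N → x u * x v = x v * x u)
    (braid : ∀ u, 1 ≤ u → u + 1 ≤ N → x u * x (u+1) * x u = x (u+1) * x u * x (u+1))
    {a len k : ℕ} (ha : 1 ≤ a) (hk1 : a + 1 ≤ k) (hk2 : k < a + len) (hN : a + len ≤ N + 1) :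
    descProd x a len * x k = x (k-1) * descProd x a len := by
  induction len with
  | zero => omega
  | succ len ih =>
      rcases Nat.lt_or_ge k (a + len) with h | h
      · -- k strictly below the top index
        rw [descProd_succ, mul_assoc, ih h (by omega), ← mul_assoc,
          ← comm (k-1) (a+len) (by omega) (by omega) (by omega), mul_assoc, ← descProd_succ]
      · -- k = a + len
        have hk : k = a + len := by omega
        subst hk
        -- len ≥ 1 since k ≥ a+1
        obtain ⟨len', rfl⟩ : ∃ l', len = l' + 1 := ⟨len - 1, by omega⟩
        have hcomm : descProd x a len' * x (a + (len' + 1)) =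
            x (a + (len' + 1)) * descProd x a len' :=
          descProd_comm x fun t h1 h2 =>
            comm t (a + (len'+1)) (by omega) (by omega) (by omega)
        have hb : x (a + len') * x (a + (len'+1)) * x (a + len') =
            x (a + (len'+1)) * x (a + len') * x (a + (len'+1)) := by
          have := braid (a + len') (by omega) (by omega)
          simpa [show a + len' + 1 = a + (len' + 1) by omega] using this
        have hk1' : a + (len' + 1) - 1 = a + len' := by omega
        rw [descProd_succ, descProd_succ, hk1']
        calc x (a + (len'+1)) * (x (a + len') * descProd x a len') * x (a + (len'+1))
            = x (a + (len'+1)) * x (a + len') * (descProd x a len' * x (a + (len'+1))) := by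
              group
          _ = x (a + (len'+1)) * x (a + len') * (x (a + (len'+1)) * descProd x a len') := by
              rw [hcomm]
          _ = x (a + (len'+1)) * x (a + len') * x (a + (len'+1)) * descProd x a len' := by
              group
          _ = x (a + len') * x (a + (len'+1)) * x (a + len') * descProd x a len' := by
              rw [hb]
          _ = x (a + len') * (x (a + (len'+1)) * (x (a + len') * descProd x a len')) := by
              group
end Desc

/-- Key braid identity: if `a b a = b a b` then `b⁻¹ a⁻¹ b⁻² a b = a⁻²`. -/
lemma braid_conj_identity {G : Type*} [Group G] {a b : G} (h : a * b * a = b * a * b) :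
    b⁻¹ * a⁻¹ * b⁻¹ * b⁻¹ * a * b = a⁻¹ * a⁻¹ := by
  have h1 : a⁻¹ * b⁻¹ * a⁻¹ = b⁻¹ * a⁻¹ * b⁻¹ := by
    have := congrArg (·⁻¹) h
    simpa [mul_assoc] using this
  have h2 : b⁻¹ * a * b = a * b * a⁻¹ := by
    have hb : b * (b⁻¹ * a * b) = b * (a * b * a⁻¹) := by
      rw [show b * (a * b * a⁻¹) = (b * a * b) * a⁻¹ by group, ← h]; group
    exact mul_left_cancel hb
  calc b⁻¹ * a⁻¹ * b⁻¹ * b⁻¹ * a * b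
      = (b⁻¹ * a⁻¹ * b⁻¹) * (b⁻¹ * a * b) := by group
    _ = (a⁻¹ * b⁻¹ * a⁻¹) * (a * b * a⁻¹) := by rw [h1, h2]
    _ = a⁻¹ * a⁻¹ := by group


lemma PresentedGroup_rel_eq_one {α : Type*} {rels : Set (FreeGroup α)} {r : FreeGroup α}
    (h : r ∈ rels) : PresentedGroup.mk rels r = 1 :=
  (QuotientGroup.eq_one_iff r).mpr (Subgroup.subset_normalClosure h)

lemma braidσ_braid {n : ℕ} {u : ℕ} (h1 : 1 ≤ u) (h2 : u + 1 ≤ n - 1) :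
    braidσ n u * braidσ n (u+1) * braidσ n u = braidσ n (u+1) * braidσ n u * braidσ n (u+1) := by
  have hu : u - 1 < n - 1 := by omega
  have hv : (u+1) - 1 < n - 1 := by omega
  set i : Fin (n-1) := ⟨u-1, hu⟩ with hidef
  set j : Fin (n-1) := ⟨(u+1)-1, hv⟩ with hjdef
  have hr : (FreeGroup.of i * FreeGroup.of j * FreeGroup.of i *
      (FreeGroup.of j * FreeGroup.of i * FreeGroup.of j)⁻¹) ∈ braidRels (n-1) :=
    ⟨i, j, Or.inr ⟨by simp [hidef, hjdef]; omega, rfl⟩⟩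
  have h := PresentedGroup_rel_eq_one hr
  rw [map_mul, map_mul, map_inv, map_mul, map_mul] at h
  have hof : ∀ x : Fin (n-1), PresentedGroup.mk (braidRels (n-1)) (FreeGroup.of x)
      = PresentedGroup.of x := fun _ => rfl
  rw [hof, hof] at h
  have h' := mul_inv_eq_one.mp h
  show braidσ n u * braidσ n (u+1) * braidσ n u = braidσ n (u+1) * braidσ n u * braidσ n (u+1)
  rw [show braidσ n u = PresentedGroup.of i from dif_pos hu,
    show braidσ n (u+1) = PresentedGroup.of j from dif_pos hv]
  exact h'

lemma braidσ_comm {n : ℕ} {u v : ℕ} (h1 : 1 ≤ u) (h2 : u + 2 ≤ v) (h3 : v ≤ n - 1) :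
    braidσ n u * braidσ n v = braidσ n v * braidσ n u := by
  have hu : u - 1 < n - 1 := by omega
  have hv : v - 1 < n - 1 := by omega
  set i : Fin (n-1) := ⟨u-1, hu⟩ with hidef
  set j : Fin (n-1) := ⟨v-1, hv⟩ with hjdef
  have hr : (FreeGroup.of i * FreeGroup.of j *
      (FreeGroup.of j * FreeGroup.of i)⁻¹) ∈ braidRels (n-1) :=
    ⟨i, j, Or.inl ⟨Or.inl (by simp [hidef, hjdef]; omega), rfl⟩⟩
  have h := PresentedGroup_rel_eq_one hr
  rw [map_mul, map_inv, map_mul] at h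
  have hof : ∀ x : Fin (n-1), PresentedGroup.mk (braidRels (n-1)) (FreeGroup.of x)
      = PresentedGroup.of x := fun _ => rfl
  rw [hof, hof] at h
  have h' := mul_inv_eq_one.mp h
  rw [show braidσ n u = PresentedGroup.of i from dif_pos hu,
    show braidσ n v = PresentedGroup.of j from dif_pos hv]
  exact h'

lemma braidσ_eq_one {n u : ℕ} (h : n ≤ u) : braidσ n u = 1 := by
  unfold braidσ
  exact dif_neg (by omega)

/-- generic identity for case k=i+L (uses braid relation). -/
lemma case_f_identity {G : Type*} [Group G] {a b u : G} (hbu : u * b = b * u)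
    (hbr : a * b * a = b * a * b) :
    b⁻¹ * ((a*u)⁻¹ * b⁻¹ * b⁻¹ * (a*u)) * b = u⁻¹ * a⁻¹ * a⁻¹ * u := by
  have c : Commute u b := hbu
  have e1 : u⁻¹ * b⁻¹ = b⁻¹ * u⁻¹ := (c.inv_left.inv_right).eq
  have h1 := braid_conj_identity hbr
  calc b⁻¹ * ((a*u)⁻¹ * b⁻¹ * b⁻¹ * (a*u)) * b
      = (b⁻¹ * u⁻¹) * (a⁻¹ * b⁻¹ * b⁻¹ * a) * (u * b) := by group
    _ = (u⁻¹ * b⁻¹) * (a⁻¹ * b⁻¹ * b⁻¹ * a) * (b * u) := by rw [e1, hbu]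
    _ = u⁻¹ * (b⁻¹ * a⁻¹ * b⁻¹ * b⁻¹ * a * b) * u := by group
    _ = u⁻¹ * (a⁻¹ * a⁻¹) * u := by rw [h1]
    _ = u⁻¹ * a⁻¹ * a⁻¹ * u := by group

/-- generic identity for case k=j (uses braid relation). -/
lemma case_g_identity {G : Type*} [Group G] {b c d : G} (hdc : d * c = c * d)
    (hbr : b * c * b = c * b * c) :
    c⁻¹ * (d⁻¹ * b⁻¹ * b⁻¹ * d) * c =
      (d⁻¹ * b⁻¹ * b⁻¹ * d)⁻¹ * ((b*d)⁻¹ * c⁻¹ * c⁻¹ * (b*d)) * (d⁻¹ * b⁻¹ * b⁻¹ * d) := by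
  have cdc : Commute d c := hdc
  have e1 : c⁻¹ * d⁻¹ = d⁻¹ * c⁻¹ := (cdc.inv_right.inv_left).symm.eq
  have h1 : b⁻¹ * c⁻¹ * b⁻¹ * b⁻¹ * c * b = c⁻¹ * c⁻¹ := braid_conj_identity hbr.symm
  have h2 : c⁻¹ * b⁻¹ * b⁻¹ * c = b * (c⁻¹ * c⁻¹) * b⁻¹ := by rw [← h1]; group
  calc c⁻¹ * (d⁻¹ * b⁻¹ * b⁻¹ * d) * c
      = (c⁻¹ * d⁻¹) * (b⁻¹ * b⁻¹) * (d * c) := by group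
    _ = (d⁻¹ * c⁻¹) * (b⁻¹ * b⁻¹) * (c * d) := by rw [e1, hdc]
    _ = d⁻¹ * (c⁻¹ * b⁻¹ * b⁻¹ * c) * d := by group
    _ = d⁻¹ * (b * (c⁻¹ * c⁻¹) * b⁻¹) * d := by rw [h2]
    _ = (d⁻¹ * b⁻¹ * b⁻¹ * d)⁻¹ * ((b*d)⁻¹ * c⁻¹ * c⁻¹ * (b*d)) * (d⁻¹ * b⁻¹ * b⁻¹ * d) := by
        group

noncomputable def AA (n i L : ℕ) : BraidGroup n :=
  (descProd (braidσ n) i L)⁻¹ * (braidσ n (i+L))⁻¹ * (braidσ n (i+L))⁻¹ *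
    descProd (braidσ n) i L

lemma AA_def (n i L : ℕ) : AA n i L =
    (descProd (braidσ n) i L)⁻¹ * (braidσ n (i+L))⁻¹ * (braidσ n (i+L))⁻¹ *
      descProd (braidσ n) i L := rfl

lemma listProd_inv {G : Type*} [Group G] (x : ℕ → G) (i L : ℕ) :
    ((List.range L).map fun t => (x (i + t))⁻¹).prod = (descProd x i L)⁻¹ := by
  induction L with
  | zero => simp
  | succ L ih =>
      rw [List.range_succ, List.map_append, List.prod_append, ih, List.map_singleton,
        List.prod_singleton, descProd_succ, mul_inv_rev]

lemma listProd_rev {G : Type*} [Group G] (x : ℕ → G) (i L : ℕ) :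
    (((List.range L).map fun t => x (i + t)).reverse).prod = descProd x i L := by
  induction L with
  | zero => simp
  | succ L ih =>
      rw [List.range_succ, List.map_append, List.map_singleton, List.reverse_append,
        List.reverse_singleton, List.singleton_append, List.prod_cons, ih, descProd_succ]

lemma bandGen_eq_AA (n i j : ℕ) (hij : i < j) : bandGen n i j = AA n i (j-1-i) := by
  unfold bandGen
  rw [AA_def, listProd_inv, listProd_rev, show i + (j-1-i) = j-1 by omega]

def Sset (n : ℕ) : Set (BraidGroup n) :=
  {x : BraidGroup n | ∃ i j : ℕ, 1 ≤ i ∧ i < j ∧ j ≤ n ∧ x = bandGen n i j}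

noncomputable def HH (n : ℕ) : Subgroup (BraidGroup n) := Subgroup.closure (Sset n)

lemma AA_mem {n i L : ℕ} (hi : 1 ≤ i) (hL : i + L + 1 ≤ n) : AA n i L ∈ Sset n :=
  ⟨i, i+L+1, hi, by omega, hL, by
    rw [bandGen_eq_AA n i (i+L+1) (by omega), show i+L+1-1-i = L by omega]⟩

lemma AA_mem_HH {n i L : ℕ} (hi : 1 ≤ i) (hL : i + L + 1 ≤ n) : AA n i L ∈ HH n :=
  Subgroup.subset_closure (AA_mem hi hL)

lemma conj_mem {n i L k : ℕ} (hi : 1 ≤ i) (hL : i + L + 1 ≤ n) (hk1 : 1 ≤ k)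
    (hk2 : k ≤ n - 1) : (braidσ n k)⁻¹ * AA n i L * braidσ n k ∈ HH n := by
  have hcase : (k + 2 ≤ i ∨ i + L + 2 ≤ k) ∨ k + 1 = i ∨ (k = i ∧ L = 0) ∨
      (k = i ∧ 1 ≤ L) ∨ (i + 1 ≤ k ∧ k + 1 ≤ i + L) ∨ (k = i + L ∧ 1 ≤ L) ∨
      k = i + L + 1 := by omega
  rcases hcase with h | h | ⟨rfl, rfl⟩ | ⟨rfl, hL1⟩ | ⟨hki, hkL⟩ | ⟨hk, hL1⟩ | rfl
  · -- far away: commutes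
    have hD : descProd (braidσ n) i L * braidσ n k
        = braidσ n k * descProd (braidσ n) i L := by
      apply descProd_comm
      intro t h1t h2t
      rcases h with h | h
      · exact (braidσ_comm hk1 (by omega) (by omega)).symm
      · exact braidσ_comm (by omega) (by omega) hk2
    have hb : braidσ n (i+L) * braidσ n k = braidσ n k * braidσ n (i+L) := by
      rcases h with h | h
      · exact (braidσ_comm hk1 (by omega) (by omega)).symm
      · exact braidσ_comm (by omega) (by omega) hk2
    have c1 : Commute (braidσ n k) (descProd (braidσ n) i L) := hD.symm
    have c2 : Commute (braidσ n k) (braidσ n (i+L)) := hb.symm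
    have ctot : Commute (braidσ n k) (AA n i L) := by
      rw [AA_def]
      exact ((c1.inv_right.mul_right c2.inv_right).mul_right c2.inv_right).mul_right c1
    have key : (braidσ n k)⁻¹ * AA n i L * braidσ n k = AA n i L := by
      rw [mul_assoc, ← ctot.eq, ← mul_assoc, inv_mul_cancel, one_mul]
    rw [key]; exact AA_mem_HH hi hL
  · -- k = i - 1
    subst h
    have hbot := descProd_bot (braidσ n) (a := k+1) (by omega) L
    simp only [Nat.add_sub_cancel] at hbot
    have key : (braidσ n k)⁻¹ * AA n (k+1) L * braidσ n k = AA n k (L+1) := by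
      rw [AA_def n (k+1) L, AA_def n k (L+1), ← hbot, show k + (L+1) = (k+1) + L by omega]
      group
    rw [key]; exact AA_mem_HH (by omega) (by omega)
  · -- k = i, L = 0
    have key : (braidσ n k)⁻¹ * AA n k 0 * braidσ n k = AA n k 0 := by
      rw [AA_def]; simp only [descProd_zero, Nat.add_zero]; group
    rw [key]; exact AA_mem_HH hi hL
  · -- k = i, L ≥ 1
    obtain ⟨L', rfl⟩ : ∃ L', L = L' + 1 := ⟨L - 1, by omega⟩
    have hbot := descProd_bot (braidσ n) (a := k+1) (by omega) L'
    simp only [Nat.add_sub_cancel] at hbot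
    have key : (braidσ n k)⁻¹ * AA n k (L'+1) * braidσ n k
        = (AA n k 0) * AA n (k+1) L' * (AA n k 0)⁻¹ := by
      rw [AA_def n k (L'+1), AA_def n (k+1) L', AA_def n k 0, ← hbot, descProd_zero,
        Nat.add_zero, show k + (L'+1) = (k+1) + L' by omega]
      group
      rw [zpow_two]
      group
    rw [key]
    exact mul_mem (mul_mem (AA_mem_HH hi (by omega)) (AA_mem_HH (by omega) (by omega)))
      (inv_mem (AA_mem_HH hi (by omega)))
  · -- intermediate
    have hswap := descProd_swap (braidσ n) (n-1)
      (fun u v a b c => braidσ_comm a b c) (fun u a b => braidσ_braid a b)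
      (a := i) (len := L) (k := k) hi hki (by omega) (by omega)
    have hcb : Commute (braidσ n (k-1)) (braidσ n (i+L)) :=
      braidσ_comm (by omega) (by omega) (by omega)
    have hinner : (braidσ n (k-1))⁻¹ * (braidσ n (i+L))⁻¹ * (braidσ n (i+L))⁻¹
        * braidσ n (k-1) = (braidσ n (i+L))⁻¹ * (braidσ n (i+L))⁻¹ := by
      have ceq : Commute ((braidσ n (k-1))⁻¹) ((braidσ n (i+L))⁻¹ * (braidσ n (i+L))⁻¹) :=
        (hcb.inv_left.inv_right).mul_right (hcb.inv_left.inv_right)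
      calc (braidσ n (k-1))⁻¹ * (braidσ n (i+L))⁻¹ * (braidσ n (i+L))⁻¹ * braidσ n (k-1)
          = ((braidσ n (k-1))⁻¹ * ((braidσ n (i+L))⁻¹ * (braidσ n (i+L))⁻¹))
              * braidσ n (k-1) := by group
        _ = (((braidσ n (i+L))⁻¹ * (braidσ n (i+L))⁻¹) * (braidσ n (k-1))⁻¹)
              * braidσ n (k-1) := by rw [ceq.eq]
        _ = (braidσ n (i+L))⁻¹ * (braidσ n (i+L))⁻¹ := by group
    have key : (braidσ n k)⁻¹ * AA n i L * braidσ n k = AA n i L := by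
      rw [AA_def]
      calc (braidσ n k)⁻¹ * ((descProd (braidσ n) i L)⁻¹ * (braidσ n (i+L))⁻¹
              * (braidσ n (i+L))⁻¹ * descProd (braidσ n) i L) * braidσ n k
          = (descProd (braidσ n) i L * braidσ n k)⁻¹ * (braidσ n (i+L))⁻¹
              * (braidσ n (i+L))⁻¹ * (descProd (braidσ n) i L * braidσ n k) := by group
        _ = (braidσ n (k-1) * descProd (braidσ n) i L)⁻¹ * (braidσ n (i+L))⁻¹
              * (braidσ n (i+L))⁻¹ * (braidσ n (k-1) * descProd (braidσ n) i L) := by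
            rw [hswap]
        _ = (descProd (braidσ n) i L)⁻¹ * ((braidσ n (k-1))⁻¹ * (braidσ n (i+L))⁻¹
              * (braidσ n (i+L))⁻¹ * braidσ n (k-1)) * descProd (braidσ n) i L := by group
        _ = (descProd (braidσ n) i L)⁻¹ * ((braidσ n (i+L))⁻¹ * (braidσ n (i+L))⁻¹)
              * descProd (braidσ n) i L := by rw [hinner]
        _ = AA n i L := by rw [AA_def]; group
    rw [key]; exact AA_mem_HH hi hL
  · -- k = i + L, L ≥ 1
    obtain ⟨L', rfl⟩ : ∃ L', L = L' + 1 := ⟨L - 1, by omega⟩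
    subst hk
    have hbr := braidσ_braid (n := n) (u := i+L') (by omega) (by omega)
    have hbu : descProd (braidσ n) i L' * braidσ n (i+L'+1)
        = braidσ n (i+L'+1) * descProd (braidσ n) i L' :=
      descProd_comm _ (fun t h1t h2t => braidσ_comm (by omega) (by omega) (by omega))
    have key : (braidσ n (i+(L'+1)))⁻¹ * AA n i (L'+1) * braidσ n (i+(L'+1)) = AA n i L' := by
      rw [AA_def n i (L'+1), AA_def n i L', descProd_succ,
        show i + (L'+1) = i+L'+1 by omega]
      exact case_f_identity hbu hbr
    rw [key]; exact AA_mem_HH hi (by omega)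
  · -- k = i + L + 1
    have hbr := braidσ_braid (n := n) (u := i+L) (by omega) (by omega)
    have hdc : descProd (braidσ n) i L * braidσ n (i+L+1)
        = braidσ n (i+L+1) * descProd (braidσ n) i L :=
      descProd_comm _ (fun t h1t h2t => braidσ_comm (by omega) (by omega) (by omega))
    have key : (braidσ n (i+L+1))⁻¹ * AA n i L * braidσ n (i+L+1) =
        (AA n i L)⁻¹ * AA n i (L+1) * AA n i L := by
      rw [AA_def n i L, AA_def n i (L+1), descProd_succ,
        show i + (L+1) = i+L+1 by omega]
      exact case_g_identity hdc hbr
    rw [key]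
    exact mul_mem (mul_mem (inv_mem (AA_mem_HH hi hL)) (AA_mem_HH hi (by omega)))
      (AA_mem_HH hi hL)

lemma sq_eq_AA_inv {n k : ℕ} : braidσ n k * braidσ n k = (AA n k 0)⁻¹ := by
  rw [AA_def, descProd_zero, Nat.add_zero]; group; rw [zpow_two]

lemma conj_mem' {n i L k : ℕ} (hi : 1 ≤ i) (hL : i + L + 1 ≤ n) (hk1 : 1 ≤ k)
    (hk2 : k ≤ n - 1) : braidσ n k * AA n i L * (braidσ n k)⁻¹ ∈ HH n := by
  have hn1 : 1 ≤ n := by omega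
  have key : braidσ n k * AA n i L * (braidσ n k)⁻¹ =
      (braidσ n k * braidσ n k) * ((braidσ n k)⁻¹ * AA n i L * braidσ n k) *
        (braidσ n k * braidσ n k)⁻¹ := by group
  rw [key, sq_eq_AA_inv]
  exact mul_mem (mul_mem (inv_mem (AA_mem_HH hk1 (by omega)))
    (conj_mem hi hL hk1 hk2)) (inv_mem (inv_mem (AA_mem_HH hk1 (by omega))))

lemma Sset_decomp {n : ℕ} {x : BraidGroup n} (hx : x ∈ Sset n) :
    ∃ i L, 1 ≤ i ∧ i + L + 1 ≤ n ∧ x = AA n i L := by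
  obtain ⟨i, j, h1, h2, h3, rfl⟩ := hx
  exact ⟨i, j - 1 - i, h1, by omega, bandGen_eq_AA n i j h2⟩

lemma conj_HH_right {n u : ℕ} (h1 : 1 ≤ u) (h2 : u ≤ n - 1) {h : BraidGroup n}
    (hh : h ∈ HH n) : (braidσ n u)⁻¹ * h * braidσ n u ∈ HH n := by
  refine Subgroup.closure_induction (k := Sset n)
    (p := fun g _ => (braidσ n u)⁻¹ * g * braidσ n u ∈ HH n) ?_ ?_ ?_ ?_ hh
  · intro x hx
    obtain ⟨i, L, hi, hL, rfl⟩ := Sset_decomp hx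
    exact conj_mem hi hL h1 h2
  · simpa using one_mem (HH n)
  · intro x y hx hy px py
    have : (braidσ n u)⁻¹ * (x * y) * braidσ n u =
        ((braidσ n u)⁻¹ * x * braidσ n u) * ((braidσ n u)⁻¹ * y * braidσ n u) := by group
    rw [this]; exact mul_mem px py
  · intro x hx px
    have : (braidσ n u)⁻¹ * x⁻¹ * braidσ n u =
        ((braidσ n u)⁻¹ * x * braidσ n u)⁻¹ := by group
    rw [this]; exact inv_mem px

lemma conj_HH_left {n u : ℕ} (h1 : 1 ≤ u) (h2 : u ≤ n - 1) {h : BraidGroup n}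
    (hh : h ∈ HH n) : braidσ n u * h * (braidσ n u)⁻¹ ∈ HH n := by
  refine Subgroup.closure_induction (k := Sset n)
    (p := fun g _ => braidσ n u * g * (braidσ n u)⁻¹ ∈ HH n) ?_ ?_ ?_ ?_ hh
  · intro x hx
    obtain ⟨i, L, hi, hL, rfl⟩ := Sset_decomp hx
    exact conj_mem' hi hL h1 h2
  · simpa using one_mem (HH n)
  · intro x y hx hy px py
    have : braidσ n u * (x * y) * (braidσ n u)⁻¹ =
        (braidσ n u * x * (braidσ n u)⁻¹) * (braidσ n u * y * (braidσ n u)⁻¹) := by group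
    rw [this]; exact mul_mem px py
  · intro x hx px
    have : braidσ n u * x⁻¹ * (braidσ n u)⁻¹ =
        (braidσ n u * x * (braidσ n u)⁻¹)⁻¹ := by group
    rw [this]; exact inv_mem px

lemma braidσ_of {n : ℕ} (i : Fin (n-1)) :
    braidσ n (i.val + 1) = (PresentedGroup.of i : BraidGroup n) := by
  unfold braidσ
  exact (dif_pos (show i.val + 1 - 1 < n - 1 by simp [i.isLt])).trans
    (congrArg PresentedGroup.of (Fin.ext (by simp)))

lemma mem_normalizer_of_conj {G : Type*} [Group G] {H : Subgroup G} {g : G}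
    (h1 : ∀ h ∈ H, g * h * g⁻¹ ∈ H) (h2 : ∀ h ∈ H, g⁻¹ * h * g ∈ H) :
    g ∈ Subgroup.normalizer (H : Set G) := by
  rw [Subgroup.mem_normalizer_iff]
  intro x
  constructor
  · exact fun hx => h1 x hx
  · intro hx
    have h3 := h2 _ hx
    have e : g⁻¹ * (g * x * g⁻¹) * g = x := by group
    rwa [e] at h3

lemma HH_normal (n : ℕ) : (HH n).Normal := by
  rw [← Subgroup.normalizer_eq_top_iff]
  have htop : Subgroup.closure (G := BraidGroup n)
      (Set.range (PresentedGroup.of : Fin (n-1) → BraidGroup n)) = ⊤ :=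
    PresentedGroup.closure_range_of _
  rw [eq_top_iff]
  refine le_trans (le_of_eq htop.symm) ?_
  rw [Subgroup.closure_le]
  rintro x ⟨i, rfl⟩
  suffices hs : braidσ n (i.val + 1) ∈ Subgroup.normalizer (HH n : Set (BraidGroup n)) by
    rw [braidσ_of i] at hs; exact hs
  have hu1 : 1 ≤ i.val + 1 := by omega
  have hu2 : i.val + 1 ≤ n - 1 := by have := i.isLt; omega
  exact mem_normalizer_of_conj (fun h hh => conj_HH_left hu1 hu2 hh)
    (fun h hh => conj_HH_right hu1 hu2 hh)

theorem cox_card {G : Type*} [Group G] (m : ℕ) : ∀ (x : ℕ → G),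
    (∀ u, 1 ≤ u → u ≤ m → x u * x u = 1) →
    (∀ u v, 1 ≤ u → u + 2 ≤ v → v ≤ m → x u * x v = x v * x u) →
    (∀ u, 1 ≤ u → u + 1 ≤ m → x u * x (u+1) * x u = x (u+1) * x u * x (u+1)) →
    ∃ S : Finset G, (Subgroup.closure (x '' {u | 1 ≤ u ∧ u ≤ m}) : Set G) ⊆ ↑S ∧
      S.card ≤ (m+1).factorial := by
  induction m with
  | zero =>
      intro x _ _ _
      refine ⟨{1}, ?_, by simp⟩
      have he : {u : ℕ | 1 ≤ u ∧ u ≤ 0} = ∅ := by ext u; simp; omega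
      rw [he, Set.image_empty, Subgroup.closure_empty]
      intro g hg
      simp only [Subgroup.coe_bot, Set.mem_singleton_iff] at hg
      simp [hg]
  | succ m ih =>
      intro x sq comm braid
      classical
      obtain ⟨Sm, hSm, hSmcard⟩ := ih x (fun u a b => sq u a (by omega))
        (fun u v a b c => comm u v a b (by omega)) (fun u a b => braid u a (by omega))
      set Km := Subgroup.closure (x '' {u | 1 ≤ u ∧ u ≤ m}) with hKm
      set T : ℕ → G := fun r => descProd x r (m+2-r) with hT
      have hgen : ∀ w, 1 ≤ w → w ≤ m → x w ∈ Km := fun w a b =>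
        Subgroup.subset_closure ⟨w, ⟨a, b⟩, rfl⟩
      have key : ∀ r u, 1 ≤ r → r ≤ m+2 → 1 ≤ u → u ≤ m+1 →
          ∃ h' ∈ Km, ∃ r', 1 ≤ r' ∧ r' ≤ m+2 ∧ T r * x u = h' * T r' := by
        intro r u hr1 hr2 hu1 hu2
        rcases (by omega : u + 2 ≤ r ∨ u + 1 = r ∨ u = r ∨ (r + 1 ≤ u)) with h | h | h | h
        · have hc : T r * x u = x u * T r := by
            rw [hT]
            exact descProd_comm x (fun t h1t h2t => (comm u t hu1 (by omega) (by omega)).symm)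
          exact ⟨x u, hgen u hu1 (by omega), r, hr1, hr2, by rw [hc]⟩
        · refine ⟨1, one_mem _, u, hu1, by omega, ?_⟩
          rw [one_mul, hT]
          have hb := descProd_bot x (a := r) (by omega) (m+2-r)
          rw [show r - 1 = u by omega, show m+2-r+1 = m+2-u by omega] at hb
          exact hb
        · subst h
          refine ⟨1, one_mem _, u+1, by omega, by omega, ?_⟩
          have hb := descProd_bot x (a := u+1) (by omega) (m+2-(u+1))
          simp only [Nat.add_sub_cancel] at hb
          rw [show m+2-(u+1)+1 = m+2-u by omega] at hb
          rw [one_mul, hT]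
          simp only
          rw [← hb, mul_assoc, sq u hu1 (by omega), mul_one]
        · have hswap := descProd_swap x (m+1)
            (fun a b c d e => comm a b c d e) (fun a b c => braid a b c)
            (a := r) (len := m+2-r) (k := u) hr1 (by omega) (by omega) (by omega)
          refine ⟨x (u-1), hgen (u-1) (by omega) (by omega), r, hr1, hr2, ?_⟩
          rw [hT]; exact hswap
      set U : Set G := {g | ∃ h ∈ Km, ∃ r, 1 ≤ r ∧ r ≤ m+2 ∧ g = h * T r} with hU
      have hone : (1 : G) ∈ U := by
        refine ⟨1, one_mem _, m+2, by omega, le_rfl, ?_⟩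
        rw [hT]
        simp [show m+2-(m+2) = 0 by omega]
      have hstep : ∀ g, g ∈ U → ∀ u, 1 ≤ u → u ≤ m+1 → g * x u ∈ U := by
        rintro g ⟨h, hh, r, hr1, hr2, rfl⟩ u hu1 hu2
        obtain ⟨h', hh', r', h1', h2', heq⟩ := key r u hr1 hr2 hu1 hu2
        exact ⟨h * h', mul_mem hh hh', r', h1', h2', by rw [mul_assoc, heq, ← mul_assoc]⟩
      have hcover : (Subgroup.closure (x '' {u | 1 ≤ u ∧ u ≤ m+1}) : Set G) ⊆ U := by
        intro g hg
        rw [SetLike.mem_coe] at hg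
        refine Subgroup.closure_induction_right (p := fun g _ => g ∈ U) hone ?_ ?_ hg
        · rintro g _ y ⟨u, ⟨hu1, hu2⟩, rfl⟩ hgU
          exact hstep g hgU u hu1 hu2
        · rintro g _ y ⟨u, ⟨hu1, hu2⟩, rfl⟩ hgU
          rw [inv_eq_of_mul_eq_one_right (sq u hu1 hu2)]
          exact hstep g hgU u hu1 hu2
      refine ⟨Finset.image (fun p : G × ℕ => p.1 * T p.2) (Sm ×ˢ Finset.Icc 1 (m+2)),
        ?_, ?_⟩
      · intro g hg
        obtain ⟨h, hh, r, hr1, hr2, rfl⟩ := hcover hg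
        simp only [Finset.coe_image, Set.mem_image, Finset.mem_coe, Finset.mem_product]
        exact ⟨(h, r), by
          simp only [Finset.mem_product, Finset.mem_Icc]
          exact ⟨hSm hh, hr1, hr2⟩, rfl⟩
      · calc (Finset.image (fun p : G × ℕ => p.1 * T p.2) (Sm ×ˢ Finset.Icc 1 (m+2))).card
            ≤ (Sm ×ˢ Finset.Icc 1 (m+2)).card := Finset.card_image_le
          _ = Sm.card * (m+2) := by rw [Finset.card_product, Nat.card_Icc, Nat.add_sub_cancel]
          _ ≤ (m+1).factorial * (m+2) := Nat.mul_le_mul_right _ hSmcard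
          _ = (m+2).factorial := by rw [Nat.factorial_succ (m+1)]; ring


theorem pureBraidGroup_generated_by_bandGens (n : ℕ) (hn : 2 ≤ n)
    (π : BraidGroup n →* Equiv.Perm (Fin n))
    (hπ : ∀ i : Fin (n - 1),
      π (PresentedGroup.of i) =
        Equiv.swap ⟨i.val, by have := i.isLt; omega⟩
          ⟨i.val + 1, by have := i.isLt; omega⟩) :
    MonoidHom.ker π =
      Subgroup.closure {x : BraidGroup n | ∃ i j : ℕ,
        1 ≤ i ∧ i < j ∧ j ≤ n ∧ x = bandGen n i j} := by
  show MonoidHom.ker π = HH n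
  -- squares map to 1 under π
  have pi_sq : ∀ u : ℕ, π (braidσ n u) * π (braidσ n u) = 1 := by
    intro u
    by_cases h : u - 1 < n - 1
    · rw [show braidσ n u = PresentedGroup.of ⟨u-1, h⟩ from dif_pos h, hπ]
      exact Equiv.swap_mul_self _ _
    · rw [show braidσ n u = 1 from dif_neg h]; simp
  -- H ≤ ker π
  have hker : HH n ≤ MonoidHom.ker π := by
    rw [HH, Subgroup.closure_le]
    intro g hg
    obtain ⟨i, L, hi, hL, rfl⟩ := Sset_decomp hg
    rw [SetLike.mem_coe, MonoidHom.mem_ker, AA_def]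
    simp only [map_mul, map_inv]
    set d := π (descProd (braidσ n) i L)
    set q := π (braidσ n (i+L))
    rw [inv_eq_of_mul_eq_one_right (pi_sq (i+L))]
    have e : d⁻¹ * q * q * d = d⁻¹ * (q * q) * d := by group
    rw [e, pi_sq (i+L), mul_one, inv_mul_cancel]
  -- π is surjective
  have hswap_adj : ∀ a b : Fin n, b.val = a.val + 1 → Equiv.swap a b ∈ π.range := by
    intro a b hab
    have hlt : a.val < n - 1 := by have := b.isLt; omega
    refine ⟨PresentedGroup.of ⟨a.val, hlt⟩, ?_⟩
    rw [hπ]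
    congr 1 <;> exact Fin.ext (by simp [hab])
  have hswap_dist : ∀ d : ℕ, ∀ a b : Fin n, b.val = a.val + d + 1 →
      Equiv.swap a b ∈ π.range := by
    intro d
    induction d with
    | zero => intro a b hab; exact hswap_adj a b (by omega)
    | succ d ihd =>
        intro a b hab
        set mid : Fin n := ⟨a.val + d + 1, by have := b.isLt; omega⟩ with hmid
        exact SubmonoidClass.swap_mem_trans π.range
          (ihd a mid rfl) (hswap_adj mid b (by simp [hmid]; omega))
  have hsurj : Function.Surjective π := by
    rw [← MonoidHom.range_eq_top]
    rw [eq_top_iff, ← Equiv.Perm.closure_isSwap, Subgroup.closure_le]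
    rintro σ ⟨a, b, hab, rfl⟩
    rcases Nat.lt_trichotomy a.val b.val with h | h | h
    · exact hswap_dist (b.val - a.val - 1) a b (by omega)
    · exact absurd (Fin.ext h) hab
    · rw [Equiv.swap_comm]
      exact hswap_dist (a.val - b.val - 1) b a (by omega)
  -- quotient group
  haveI hnormal : (HH n).Normal := HH_normal n
  set φ := QuotientGroup.mk' (HH n) with hφ
  set x : ℕ → BraidGroup n ⧸ HH n := fun u => φ (braidσ n u) with hx
  have xsq : ∀ u, 1 ≤ u → u ≤ n-1 → x u * x u = 1 := by
    intro u h1 h2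
    rw [hx]
    rw [← map_mul, sq_eq_AA_inv]
    exact (QuotientGroup.eq_one_iff _).mpr (inv_mem (AA_mem_HH h1 (by omega)))
  have xcomm : ∀ u v, 1 ≤ u → u + 2 ≤ v → v ≤ n-1 → x u * x v = x v * x u := by
    intro u v h1 h2 h3
    rw [hx, ← map_mul, ← map_mul, braidσ_comm h1 h2 h3]
  have xbraid : ∀ u, 1 ≤ u → u + 1 ≤ n-1 →
      x u * x (u+1) * x u = x (u+1) * x u * x (u+1) := by
    intro u h1 h2
    rw [hx, ← map_mul, ← map_mul, ← map_mul, ← map_mul, braidσ_braid h1 h2]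
  have hgen_top : Subgroup.closure (x '' {u | 1 ≤ u ∧ u ≤ n-1}) = ⊤ := by
    rw [eq_top_iff, ← Subgroup.map_top_of_surjective φ (QuotientGroup.mk'_surjective _)]
    refine le_trans (Subgroup.map_mono (le_of_eq (show Subgroup.closure (G := BraidGroup n)
        (Set.range (PresentedGroup.of : Fin (n-1) → BraidGroup n)) = ⊤ from
          PresentedGroup.closure_range_of (braidRels (n-1))).symm)) ?_
    rw [MonoidHom.map_closure]
    apply Subgroup.closure_mono
    rintro y ⟨z, ⟨i, rfl⟩, rfl⟩
    exact ⟨i.val + 1, ⟨by omega, by have := i.isLt; omega⟩, congrArg φ (braidσ_of i)⟩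
  obtain ⟨S, hS, hcard⟩ := cox_card (n-1) x xsq xcomm xbraid
  rw [hgen_top] at hS
  have huniv : (Set.univ : Set (BraidGroup n ⧸ HH n)) ⊆ ↑S := by
    rw [← Subgroup.coe_top]; exact hS
  haveI hfinQ : Finite (BraidGroup n ⧸ HH n) :=
    Set.finite_univ_iff.mp (Set.Finite.subset S.finite_toSet huniv)
  have hcardQ : Nat.card (BraidGroup n ⧸ HH n) ≤ n.factorial := by
    have h1 : Nat.card (BraidGroup n ⧸ HH n)
        = (Set.univ : Set (BraidGroup n ⧸ HH n)).ncard := (Set.ncard_univ _).symm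
    have h2 : (Set.univ : Set (BraidGroup n ⧸ HH n)).ncard ≤ (↑S : Set _).ncard :=
      Set.ncard_le_ncard huniv S.finite_toSet
    rw [Set.ncard_coe_finset] at h2
    have h3 : (n-1+1).factorial = n.factorial := by rw [show n-1+1 = n by omega]
    omega
  -- the induced hom on the quotient
  set πbar := QuotientGroup.lift (HH n) π (fun g hg => hker hg) with hπbar
  have hπbar_mk : ∀ g, πbar (φ g) = π g := fun g => rfl
  have hπbar_surj : Function.Surjective πbar := by
    intro y
    obtain ⟨g, rfl⟩ := hsurj y
    exact ⟨φ g, rfl⟩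
  have hcardPerm : Nat.card (Equiv.Perm (Fin n)) = n.factorial := by
    rw [Nat.card_eq_fintype_card, Fintype.card_perm, Fintype.card_fin]
  have hQge : n.factorial ≤ Nat.card (BraidGroup n ⧸ HH n) := by
    rw [← hcardPerm]
    exact Nat.card_le_card_of_surjective πbar hπbar_surj
  have hQeq : Nat.card (BraidGroup n ⧸ HH n) = n.factorial := le_antisymm hcardQ hQge
  -- kernel of πbar is trivial
  have hkerbot : MonoidHom.ker πbar = ⊥ := by
    have hla := Subgroup.card_eq_card_quotient_mul_card_subgroup (MonoidHom.ker πbar)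
    have hquot : Nat.card ((BraidGroup n ⧸ HH n) ⧸ MonoidHom.ker πbar)
        = n.factorial := by
      rw [Nat.card_congr (QuotientGroup.quotientKerEquivOfSurjective πbar hπbar_surj).toEquiv,
        hcardPerm]
    rw [hQeq, hquot] at hla
    have hpos : 0 < n.factorial := Nat.factorial_pos n
    have : Nat.card (MonoidHom.ker πbar) = 1 := by
      have := hla.symm
      nlinarith [Nat.card_pos (α := MonoidHom.ker πbar)]
    exact Subgroup.eq_bot_of_card_le _ (le_of_eq this)
  -- conclude
  apply le_antisymm _ hker
  intro g hg
  rw [MonoidHom.mem_ker] at hg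
  have : φ g ∈ MonoidHom.ker πbar := by
    rw [MonoidHom.mem_ker, hπbar_mk, hg]
  rw [hkerbot, Subgroup.mem_bot] at this
  exact (QuotientGroup.eq_one_iff g).mp this
end

section
/- For every n > 2, the set of triples (m, i, j) of integers with m ≥ 2, (n − 1) ∣ (m − 1), 1 ≤ i < j ≤ m, i ≤ n, j − i ≤ n and m − j < n is finite and has exactly n² + n + 1 elements. -/
open Finset

/-- The set of triples `(m, i, j)` such that `A_{i,j}` is an `n`-irreducible
band generator of the pure braid group on `m` strands, where `m` is a possible
number of leaves of a full `n`-ary tree. -/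
def nIrreducibleTriples (n : ℕ) : Set (ℤ × ℤ × ℤ) :=
  {t | 2 ≤ t.1 ∧ ((n : ℤ) - 1) ∣ (t.1 - 1) ∧ 1 ≤ t.2.1 ∧ t.2.1 < t.2.2 ∧
    t.2.2 ≤ t.1 ∧ t.2.1 ≤ (n : ℤ) ∧ t.2.2 - t.2.1 ≤ (n : ℤ) ∧
    t.1 - t.2.2 < (n : ℤ)}

private noncomputable def G1 (n : ℕ) : Finset (ℤ × ℤ × ℤ) :=
  (range (n - 1)).biUnion fun k =>
    (Finset.Icc (1 : ℤ) (k + 1)).image fun i => ((n : ℤ), i, (k : ℤ) + 2)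

private noncomputable def G2 (n : ℕ) : Finset (ℤ × ℤ × ℤ) :=
  ((Finset.Icc (1 : ℤ) ((n : ℤ) - 1)).image fun i => (2 * (n : ℤ) - 1, i, (n : ℤ))) ∪
    ((range (n - 1)).biUnion fun k =>
      (Finset.Icc ((k : ℤ) + 1) (n : ℤ)).image fun i =>
        (2 * (n : ℤ) - 1, i, (n : ℤ) + 1 + k))

private def G3 (n : ℕ) : Finset (ℤ × ℤ × ℤ) :=
  {(3 * (n : ℤ) - 2, (n : ℤ) - 1, 2 * (n : ℤ) - 1),
   (3 * (n : ℤ) - 2, (n : ℤ), 2 * (n : ℤ) - 1),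
   (3 * (n : ℤ) - 2, (n : ℤ), 2 * (n : ℤ))}

private lemma set_eq_finset (n : ℕ) (hn : 2 < n) :
    nIrreducibleTriples n = ↑(G1 n ∪ G2 n ∪ G3 n) := by
  have hn3 : (3 : ℤ) ≤ (n : ℤ) := by exact_mod_cast hn
  ext ⟨m, i, j⟩
  simp only [nIrreducibleTriples, Set.mem_setOf_eq, coe_union, Set.mem_union, Finset.mem_coe,
    G1, G2, G3, mem_union, mem_biUnion, mem_image, mem_Icc, mem_range, mem_insert,
    mem_singleton, Prod.mk.injEq]
  constructor
  · rintro ⟨hm2, ⟨k, hk⟩, h1, h2, h3, h4, h5, h6⟩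
    have hk1 : 1 ≤ k := by nlinarith
    have hk3 : k ≤ 3 := by nlinarith
    interval_cases k
    · -- m = n
      refine Or.inl (Or.inl ⟨(j - 2).toNat, ?_, i, ⟨?_, ?_⟩, ?_, ?_, ?_⟩) <;> omega
    · -- m = 2n - 1
      by_cases hj : j = (n : ℤ)
      · refine Or.inl (Or.inr (Or.inl ⟨i, ⟨?_, ?_⟩, ?_, ?_, ?_⟩)) <;> omega
      · refine Or.inl (Or.inr (Or.inr ⟨(j - n - 1).toNat, ?_, i, ⟨?_, ?_⟩, ?_, ?_, ?_⟩)) <;>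
          omega
    · -- m = 3n - 2
      refine Or.inr ?_
      omega
  · rintro ((⟨k, hk, i', ⟨hi1, hi2⟩, hm, hi, hj⟩ |
        (⟨i', ⟨hi1, hi2⟩, hm, hi, hj⟩ | ⟨k, hk, i', ⟨hi1, hi2⟩, hm, hi, hj⟩)) | h)
    · exact ⟨by omega, ⟨1, by omega⟩, by omega, by omega, by omega, by omega, by omega, by omega⟩
    · exact ⟨by omega, ⟨2, by omega⟩, by omega, by omega, by omega, by omega, by omega, by omega⟩
    · exact ⟨by omega, ⟨2, by omega⟩, by omega, by omega, by omega, by omega, by omega, by omega⟩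
    · rcases h with ⟨hm, hi, hj⟩ | ⟨hm, hi, hj⟩ | ⟨hm, hi, hj⟩ <;>
        exact ⟨by omega, ⟨3, by omega⟩, by omega, by omega, by omega, by omega, by omega, by omega⟩

private lemma card_G1 (n : ℕ) : (G1 n).card = ∑ k ∈ range (n - 1), (k + 1) := by
  unfold G1
  rw [card_biUnion]
  · refine sum_congr rfl fun k _ => ?_
    rw [card_image_of_injective _ (fun a b h => by simpa using h), Int.card_Icc]
    omega
  · intro x _ y _ hxy
    refine disjoint_left.mpr ?_
    rintro a ha ha'
    simp only [mem_image, mem_Icc] at ha ha'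
    obtain ⟨i, _, rfl⟩ := ha
    obtain ⟨i', _, h⟩ := ha'
    apply hxy
    have := (Prod.mk.injEq _ _ _ _).mp h
    have h2 := (Prod.mk.injEq _ _ _ _).mp this.2
    omega

private lemma card_G2 (n : ℕ) (hn : 2 < n) :
    (G2 n).card = (n - 1) + ∑ k ∈ range (n - 1), (n - k) := by
  unfold G2
  rw [card_union_of_disjoint, card_image_of_injective _ (fun a b h => by simpa using h),
    Int.card_Icc, card_biUnion]
  · congr 1
    · omega
    refine sum_congr rfl fun k hk => ?_
    rw [card_image_of_injective _ (fun a b h => by simpa using h), Int.card_Icc]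
    simp only [mem_range] at hk
    omega
  · intro x _ y _ hxy
    refine disjoint_left.mpr ?_
    rintro a ha ha'
    simp only [mem_image, mem_Icc] at ha ha'
    obtain ⟨i, _, rfl⟩ := ha
    obtain ⟨i', _, h⟩ := ha'
    apply hxy
    have := (Prod.mk.injEq _ _ _ _).mp h
    have h2 := (Prod.mk.injEq _ _ _ _).mp this.2
    omega
  · refine disjoint_left.mpr ?_
    rintro a ha ha'
    simp only [mem_image, mem_Icc, mem_biUnion, mem_range] at ha ha'
    obtain ⟨i, _, rfl⟩ := ha
    obtain ⟨k, hk, i', _, h⟩ := ha'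
    have := (Prod.mk.injEq _ _ _ _).mp h
    have h2 := (Prod.mk.injEq _ _ _ _).mp this.2
    omega

private lemma card_G3 (n : ℕ) : (G3 n).card = 3 := by
  unfold G3
  rw [card_insert_of_notMem, card_insert_of_notMem, card_singleton]
  · simp only [mem_singleton, Prod.mk.injEq, not_and]
    intro _ _
    omega
  · simp only [mem_insert, mem_singleton, Prod.mk.injEq, not_or, not_and]
    exact ⟨fun _ h => by omega, fun _ _ => by omega⟩

private lemma disj12 (n : ℕ) (hn : 2 < n) : Disjoint (G1 n) (G2 n) := by
  refine disjoint_left.mpr ?_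
  rintro a ha ha'
  simp only [G1, G2, mem_union, mem_biUnion, mem_image, mem_Icc, mem_range] at ha ha'
  obtain ⟨k, _, i, _, rfl⟩ := ha
  rcases ha' with ⟨i', _, h⟩ | ⟨k', _, i', _, h⟩ <;>
  · have := ((Prod.mk.injEq _ _ _ _).mp h).1
    omega

private lemma disj123 (n : ℕ) (hn : 2 < n) : Disjoint (G1 n ∪ G2 n) (G3 n) := by
  refine disjoint_left.mpr ?_
  rintro a ha ha'
  simp only [G1, G2, G3, mem_union, mem_biUnion, mem_image, mem_Icc, mem_range, mem_insert,
    mem_singleton] at ha ha'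
  have h1 : a.1 = 3 * (n : ℤ) - 2 := by
    rcases ha' with rfl | rfl | rfl <;> rfl
  rcases ha with ⟨k, _, i, _, rfl⟩ | ⟨i', _, h⟩ | ⟨k', _, i', _, h⟩
  · simp at h1; omega
  · rw [← h] at h1; simp at h1; omega
  · rw [← h] at h1; simp at h1; omega

private lemma card_total (n : ℕ) (hn : 2 < n) :
    (G1 n ∪ G2 n ∪ G3 n).card = n ^ 2 + n + 1 := by
  rw [card_union_of_disjoint (disj123 n hn), card_union_of_disjoint (disj12 n hn),
    card_G1, card_G2 n hn, card_G3]
  have hsum : (∑ k ∈ range (n - 1), (k + 1)) + (∑ k ∈ range (n - 1), (n - k))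
      = (n - 1) * (n + 1) := by
    rw [← sum_add_distrib]
    rw [sum_congr rfl (fun k hk => by simp only [mem_range] at hk; omega : ∀ k ∈ range (n-1),
      (k + 1) + (n - k) = n + 1)]
    rw [sum_const, card_range, smul_eq_mul]
  have harith : (n - 1) * (n + 1) + (n - 1) + 3 = n ^ 2 + n + 1 := by
    obtain ⟨m, rfl⟩ : ∃ m, n = m + 3 := ⟨n - 3, by omega⟩
    show (m + 2) * (m + 4) + (m + 2) + 3 = (m + 3) ^ 2 + (m + 3) + 1
    ring
  omega

theorem card_nIrreducibleTriples (n : ℕ) (hn : 2 < n) :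
    (nIrreducibleTriples n).Finite ∧
      (nIrreducibleTriples n).ncard = n ^ 2 + n + 1 := by
  rw [set_eq_finset n hn]
  exact ⟨(G1 n ∪ G2 n ∪ G3 n).finite_toSet, by rw [Set.ncard_coe_finset, card_total n hn]⟩
end

section
/- For every n > 2, the set of triples (m, i, j) of integers with m ≥ 2, (n − 1) ∣ (m − 1), 1 ≤ i < j ≤ m, i ≤ n, j − i ≤ n, m − j < n, and additionally (j − i = n or m = n), is finite and has exactly (n² + n + 2)/2 elements (equivalently, twice its cardinality equals n² + n + 2). -/
/-!
Write `m = 1 + k (n - 1)` with `k ≥ 1`. If `m = n` (that is, `k = 1`), every pair `1 ≤ i < j ≤ n`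
qualifies, giving `n choose 2` triples. Otherwise `j = i + n`, and `m - j < n` together with
`i ≤ n` forces `m < 3n`, so `k ∈ {2, 3}` once `n > 2`: for `m = 2n - 1` the admissible `i` are
`1, …, n - 1`, and for `m = 3n - 2` only `i ∈ {n - 1, n}`. Hence the count is
`n (n - 1) / 2 + (n - 1) + 2 = (n² + n + 2) / 2`.
-/

/-- The set of triples `(m, i, j)` such that `A_{i,j}` is an `n`-irreducible
band generator of the pure braid group on `m` strands satisfying additionally
`j - i = n` or `m = n`, where `m` is a possible number of leaves of a full
`n`-ary tree. -/
def nIrreducibleSpecialTriples (n : ℕ) : Set (ℤ × ℤ × ℤ) :=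
  {t | 2 ≤ t.1 ∧ ((n : ℤ) - 1) ∣ (t.1 - 1) ∧ 1 ≤ t.2.1 ∧ t.2.1 < t.2.2 ∧
    t.2.2 ≤ t.1 ∧ t.2.1 ≤ (n : ℤ) ∧ t.2.2 - t.2.1 ≤ (n : ℤ) ∧
    t.1 - t.2.2 < (n : ℤ) ∧ (t.2.2 - t.2.1 = (n : ℤ) ∨ t.1 = (n : ℤ))}

open Finset

lemma eq_or_eq_or_eq_of_sub_one_dvd_sub_one {n m : ℤ} (hn : 2 < n) (hdvd : n - 1 ∣ m - 1)
    (hm : 2 ≤ m) (hm' : m < 3 * n) : m = n ∨ m = 2 * n - 1 ∨ m = 3 * n - 2 := by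
  obtain ⟨k, hk⟩ := hdvd
  have hk_pos : 0 < k := by nlinarith
  have hk_lt : k < 4 := by nlinarith
  interval_cases k <;> omega

lemma injective_mk_mk_add (m d : ℤ) : Function.Injective fun i : ℤ => (m, i, i + d) :=
  fun a b h => by simpa using h

lemma Nat.two_mul_choose_two (n : ℕ) : 2 * n.choose 2 = n * (n - 1) := by
  rw [Nat.choose_two_right, Nat.mul_div_cancel' (Nat.even_mul_pred_self n).two_dvd]

noncomputable def nIrreducibleSpecialTriplesFinset (n : ℕ) : Finset (ℤ × ℤ × ℤ) :=
  ({p ∈ Icc 1 (n : ℤ) ×ˢ Icc 1 (n : ℤ) | p.1 < p.2}).image (Prod.mk (n : ℤ)) ∪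
    (Icc 1 ((n : ℤ) - 1)).image (fun i => (2 * n - 1, i, i + n)) ∪
    (Icc ((n : ℤ) - 1) n).image (fun i => (3 * n - 2, i, i + n))

lemma nIrreducibleSpecialTriples_eq {n : ℕ} (hn : 2 < n) :
    nIrreducibleSpecialTriples n = nIrreducibleSpecialTriplesFinset n := by
  ext ⟨m, i, j⟩
  simp only [nIrreducibleSpecialTriples, nIrreducibleSpecialTriplesFinset, Set.mem_ofPred_eq,
    mem_coe, mem_union, mem_image, mem_filter, mem_product, mem_Icc, Prod.mk.injEq, Prod.exists]
  constructor
  · rintro ⟨hm, hdvd, hi, hij, hjm, hin, hji, hmj, hji' | rfl⟩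
    · rcases eq_or_eq_or_eq_of_sub_one_dvd_sub_one (by omega) hdvd hm (by omega)
        with rfl | rfl | rfl
      · omega
      · exact Or.inl (Or.inr ⟨i, by omega⟩)
      · exact Or.inr ⟨i, by omega⟩
    · exact Or.inl (Or.inl ⟨i, j, by omega⟩)
  · rintro ((⟨i, j, h, rfl, rfl, rfl⟩ | ⟨i, h, rfl, rfl, rfl⟩) | ⟨i, h, rfl, rfl, rfl⟩)
    · exact ⟨by omega, ⟨1, by ring⟩, by omega⟩
    · exact ⟨by omega, ⟨2, by ring⟩, by omega⟩
    · exact ⟨by omega, ⟨3, by ring⟩, by omega⟩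

lemma card_nIrreducibleSpecialTriplesFinset {n : ℕ} (hn : 1 < n) :
    2 * #(nIrreducibleSpecialTriplesFinset n) = n ^ 2 + n + 2 := by
  rw [nIrreducibleSpecialTriplesFinset, card_union_of_disjoint, card_union_of_disjoint,
    card_image_of_injective _ (Prod.mk_right_injective _), card_product_filter_lt,
    card_image_of_injective _ (injective_mk_mk_add _ _),
    card_image_of_injective _ (injective_mk_mk_add _ _), Int.card_Icc, Int.card_Icc, Int.card_Icc]
  · rw [show ((n : ℤ) + 1 - 1).toNat = n by omega, show ((n : ℤ) - 1 + 1 - 1).toNat = n - 1 by omega,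
      show ((n : ℤ) + 1 - (n - 1)).toNat = 2 by omega, mul_add, mul_add, Nat.two_mul_choose_two]
    obtain ⟨k, rfl⟩ : ∃ k, n = k + 1 := ⟨n - 1, by omega⟩
    simp only [add_tsub_cancel_right]
    ring
  all_goals
    simp only [disjoint_left, mem_union, mem_image]
    grind

theorem card_nIrreducibleSpecialTriples (n : ℕ) (hn : 2 < n) :
    (nIrreducibleSpecialTriples n).Finite ∧
      2 * (nIrreducibleSpecialTriples n).ncard = n ^ 2 + n + 2 := by
  rw [nIrreducibleSpecialTriples_eq hn, Set.ncard_coe_finset]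
  exact ⟨finite_toSet _, card_nIrreducibleSpecialTriplesFinset (by omega)⟩
end
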